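/- arXiv:2407.04054 — 2 statements merged into one kernel-verified Lean document; each statement's English description precedes it below -/
import Mathlib

section
/- Let G be a finite group and χ, ρ characters of G with c(χ) ⊆ c(ρ). If c(χⁱ) = c(ρⁱ) for some i ≥ 1, then c(χʲ) = c(ρʲ) for every j ≥ i. -/
open scoped Classical BigOperators

noncomputable section

namespace CharCover

/-- The inner product of class functions: `⟨f,h⟩ = |G|⁻¹ ∑ f(x) h(x⁻¹)`. -/
def classInner {G : Type*} [Group G] [Fintype G] (f h : G → ℂ) : ℂ :=
  (Fintype.card G : ℂ)⁻¹ * ∑ x : G, f x * h x⁻¹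

/-- `f` is the character of some finite-dimensional complex representation of `G`. -/
def IsChar (G : Type) [Group G] (f : G → ℂ) : Prop :=
  ∃ V : FDRep ℂ G, f = V.character

/-- `f` is the character of some irreducible complex representation of `G`. -/
def IsIrrChar (G : Type) [Group G] (f : G → ℂ) : Prop :=
  ∃ V : FDRep ℂ G, CategoryTheory.Simple V ∧ f = V.character

/-- The set `c(f)` of irreducible constituents of `f`. -/
def constituents (G : Type) [Group G] [Fintype G] (f : G → ℂ) : Set (G → ℂ) :=
  {θ | IsIrrChar G θ ∧ classInner f θ ≠ 0}

section Aux

open CategoryTheory MonoidalCategory Module FDRep Representation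

set_option linter.unusedSectionVars false

variable {G : Type} [Group G] [Fintype G]

def IsSubrep (V : FDRep ℂ G) (p : Submodule ℂ V) : Prop := ∀ (g : G) v, v ∈ p → V.ρ g v ∈ p

def subrepρ (V : FDRep ℂ G) (p : Submodule ℂ V) (h : IsSubrep V p) : Representation ℂ G p where
  toFun g := (V.ρ g).restrict (fun v hv => h g v hv)
  map_one' := by ext v; simp [LinearMap.restrict_apply]
  map_mul' g₁ g₂ := by ext v; simp [LinearMap.restrict_apply]

def subrep (V : FDRep ℂ G) (p : Submodule ℂ V) (h : IsSubrep V p) : FDRep ℂ G :=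
  FDRep.of (subrepρ V p h)

lemma subrep_char (V : FDRep ℂ G) (p : Submodule ℂ V) (h : IsSubrep V p) (g : G) :
    (subrep V p h).character g = LinearMap.trace ℂ p (subrepρ V p h g) := rfl

lemma char_add_of_isCompl (V : FDRep ℂ G) (p q : Submodule ℂ V)
    (hp : IsSubrep V p) (hq : IsSubrep V q) (hpq : IsCompl p q) :
    V.character = (subrep V p hp).character + (subrep V q hq).character := by
  funext g
  set e := Submodule.prodEquivOfIsCompl p q hpq with he
  have key : V.ρ g = e.conj (LinearMap.prodMap (subrepρ V p hp g) (subrepρ V q hq g)) := by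
    rw [LinearEquiv.conj_apply]
    rw [LinearEquiv.eq_comp_toLinearMap_symm]
    ext v
    · simp [he, Submodule.coe_prodEquivOfIsCompl, subrepρ, LinearMap.restrict_apply]
    · simp [he, Submodule.coe_prodEquivOfIsCompl, subrepρ, LinearMap.restrict_apply]
  show LinearMap.trace ℂ V (V.ρ g) = _
  rw [key, LinearMap.trace_conj', LinearMap.trace_prodMap']
  rfl

lemma maschke (V : FDRep ℂ G) (p : Submodule ℂ V) (hp : IsSubrep V p) :
    ∃ q : Submodule ℂ V, IsSubrep V q ∧ IsCompl p q := by
  obtain ⟨q0, hq0⟩ := Submodule.exists_isCompl p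
  set π0 : ↥V →ₗ[ℂ] ↥V := p.subtype ∘ₗ (p.projectionOnto q0 hq0) with hπ0
  have hπ0p : ∀ x ∈ p, π0 x = x := fun x hx => by
    simp [hπ0, Submodule.projectionOnto_apply_left hq0 ⟨x, hx⟩]
  have hπ0mem : ∀ x, π0 x ∈ p := fun x => (p.projectionOnto q0 hq0 x).2
  set c : ℂ := (Fintype.card G : ℂ)⁻¹ with hc
  have hcard : (Fintype.card G : ℂ) ≠ 0 := by exact_mod_cast Fintype.card_ne_zero
  set π : ↥V →ₗ[ℂ] ↥V := c • ∑ g : G, (V.ρ g) ∘ₗ π0 ∘ₗ (V.ρ g⁻¹) with hπ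
  have πapply : ∀ x, π x = c • ∑ g : G, V.ρ g (π0 (V.ρ g⁻¹ x)) := by
    intro x; simp [hπ, LinearMap.sum_apply]
  have hmem : ∀ x, π x ∈ p := by
    intro x; rw [πapply]
    exact p.smul_mem _ (Submodule.sum_mem _ fun g _ => hp g _ (hπ0mem _))
  have hid : ∀ x ∈ p, π x = x := by
    intro x hx
    rw [πapply]
    have : ∀ g : G, V.ρ g (π0 (V.ρ g⁻¹ x)) = x := by
      intro g
      rw [hπ0p _ (hp g⁻¹ x hx)]
      have := LinearMap.congr_fun (V.ρ.map_mul g g⁻¹) x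
      simp at this ⊢
    rw [Finset.sum_congr rfl (fun g _ => this g), Finset.sum_const, Finset.card_univ]
    rw [hc, ← Nat.cast_smul_eq_nsmul ℂ, smul_smul, inv_mul_cancel₀ hcard, one_smul]
  have hmul : ∀ (a b : G) (y : ↥V), V.ρ (a * b) y = V.ρ a (V.ρ b y) := fun a b y =>
    LinearMap.congr_fun (V.ρ.map_mul a b) y
  have hequi : ∀ (h : G) x, π (V.ρ h x) = V.ρ h (π x) := by
    intro h x
    rw [πapply, πapply, map_smul, map_sum]
    congr 1
    refine Fintype.sum_equiv (Equiv.mulLeft h).symm _ _ (fun g => ?_)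
    simp only [Equiv.mulLeft_symm, Equiv.coe_mulLeft]
    have e2 : V.ρ (h⁻¹ * g)⁻¹ x = V.ρ g⁻¹ (V.ρ h x) := by
      rw [show (h⁻¹ * g)⁻¹ = g⁻¹ * h by group]
      exact hmul g⁻¹ h x
    rw [e2, ← hmul, ← hmul, show h * (h⁻¹ * g) = g by group]
  set πp : ↥V →ₗ[ℂ] ↥p := π.codRestrict p hmem with hπp
  have hf : ∀ x : ↥p, πp x = x := fun x => Subtype.ext (hid x x.2)
  refine ⟨LinearMap.ker πp, ?_, LinearMap.isCompl_of_proj hf⟩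
  intro g v hv
  rw [LinearMap.mem_ker] at hv ⊢
  apply Subtype.ext
  have hv' : π v = 0 := congrArg Subtype.val hv
  show π (V.ρ g v) = _
  rw [hequi, hv', map_zero]
  rfl

lemma mono_inj {Y V : FDRep ℂ G} (f : Y ⟶ V) [Mono f] : Function.Injective f.hom := by
  have h2 : Mono ((forget₂ (FGModuleCat ℂ) (ModuleCat ℂ)).map ((Action.forget _ _).map f)) :=
    inferInstance
  rwa [ModuleCat.mono_iff_injective] at h2

lemma simple_of_subreps (V : FDRep ℂ G) [hnt : Nontrivial V]
    (h : ∀ p : Submodule ℂ V, IsSubrep V p → p = ⊥ ∨ p = ⊤) : Simple V := by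
  constructor
  intro Y f hm
  constructor
  · intro hiso h0
    obtain ⟨x, y, hxy⟩ := hnt
    have h1 : (CategoryTheory.inv f ≫ f) = 𝟙 V := IsIso.inv_hom_id f
    have h2 : ∀ z : ↥V, z = f.hom ((CategoryTheory.inv f).hom z) := by
      intro z
      have := congrArg Action.Hom.hom h1
      have := LinearMap.congr_fun (f := ((CategoryTheory.inv f ≫ f).hom.hom.hom :
        ↥V →ₗ[ℂ] ↥V)) (g := LinearMap.id) (by rw [this]; rfl) z
      exact this.symm
    have hf0 : f.hom = ((0 : Y ⟶ V) : Action.Hom _ _).hom := by rw [h0]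
    rw [Action.zero_hom] at hf0
    have hx := h2 x
    have hy := h2 y
    rw [hf0] at hx hy
    have : x = y := by
      rw [hx, hy]
      show (0 : ↥Y →ₗ[ℂ] ↥V) ((inv f).hom x) = (0 : ↥Y →ₗ[ℂ] ↥V) ((inv f).hom y)
      simp
    exact hxy this
  · intro hf
    have hinj : Function.Injective f.hom := mono_inj f
    have hcomm : ∀ (g : G) (y : ↥Y), f.hom (Y.ρ g y) = V.ρ g (f.hom y) := by
      intro g y
      exact LinearMap.congr_fun (congrArg (fun φ => φ.hom.hom) (f.comm g)) y
    have hrange : IsSubrep V (LinearMap.range f.hom.hom.hom) := by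
      rintro g v ⟨y, rfl⟩
      exact ⟨Y.ρ g y, hcomm g y⟩
    rcases h _ hrange with hbot | htop
    · exfalso
      apply hf
      apply Action.hom_ext
      apply FGModuleCat.hom_ext
      apply LinearMap.ext
      intro y
      have : f.hom y ∈ LinearMap.range f.hom.hom.hom := ⟨y, rfl⟩
      rw [hbot] at this
      simp at this ⊢
      exact this
    · have hsurj : Function.Surjective f.hom := LinearMap.range_eq_top.mp htop
      set e : ↥Y ≃ₗ[ℂ] ↥V := LinearEquiv.ofBijective f.hom.hom.hom ⟨hinj, hsurj⟩ with he
      have hes : ∀ z, f.hom (e.symm z) = z := fun z => e.apply_symm_apply z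
      have hse : ∀ y, e.symm (f.hom y) = y := fun y => e.symm_apply_apply y
      refine ⟨⟨⟨⟨ModuleCat.ofHom (e.symm.toLinearMap : ↥V →ₗ[ℂ] ↥Y)⟩, ?_⟩, ?_, ?_⟩⟩
      · intro g
        apply FGModuleCat.hom_ext
        apply LinearMap.ext
        intro x
        apply hinj
        show f.hom (e.symm (V.ρ g x)) = f.hom (Y.ρ g (e.symm x))
        rw [hes, hcomm, hes]
      · apply Action.hom_ext
        apply FGModuleCat.hom_ext
        apply LinearMap.ext
        intro y
        show e.symm (f.hom y) = y
        rw [hse]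
      · apply Action.hom_ext
        apply FGModuleCat.hom_ext
        apply LinearMap.ext
        intro z
        show f.hom (e.symm z) = z
        rw [hes]


lemma char_of_subsingleton (V : FDRep ℂ G) (hs : Subsingleton ↥V) : V.character = 0 := by
  funext g
  have : V.ρ g = 0 := Subsingleton.elim _ _
  show LinearMap.trace ℂ ↥V (V.ρ g) = 0
  rw [this, map_zero]

lemma exists_decomp (V : FDRep ℂ G) :
    ∃ (ι : Type) (_ : Fintype ι) (S : ι → FDRep ℂ G),
      (∀ t, Simple (S t)) ∧ V.character = ∑ t, (S t).character := by
  suffices H : ∀ (n : ℕ) (V : FDRep ℂ G), finrank ℂ ↥V = n →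
      ∃ (ι : Type) (_ : Fintype ι) (S : ι → FDRep ℂ G),
        (∀ t, Simple (S t)) ∧ V.character = ∑ t, (S t).character by
    exact H _ V rfl
  intro n
  induction n using Nat.strong_induction_on with
  | _ n IH =>
  intro V hn
  rcases subsingleton_or_nontrivial ↥V with hs | hnt
  · exact ⟨PEmpty, inferInstance, PEmpty.elim, fun t => t.elim,
      by simp [char_of_subsingleton V hs]⟩
  · by_cases hsimp : Simple V
    · exact ⟨PUnit, inferInstance, fun _ => V, fun _ => hsimp, by simp⟩
    · have hex : ¬ ∀ p : Submodule ℂ ↥V, IsSubrep V p → p = ⊥ ∨ p = ⊤ := fun hall =>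
        hsimp (simple_of_subreps V hall)
      push_neg at hex
      obtain ⟨p, hp, hpbot, hptop⟩ := hex
      obtain ⟨q, hq, hpq⟩ := maschke V p hp
      have hqtop : q ≠ ⊤ := by
        intro hqt
        apply hpbot
        have hd := hpq.disjoint
        rw [hqt, disjoint_top] at hd
        exact hd
      have h1 : finrank ℂ ↥p < n := hn ▸ Submodule.finrank_lt hptop
      have h2 : finrank ℂ ↥q < n := hn ▸ Submodule.finrank_lt hqtop
      have e1 : finrank ℂ ↥(subrep V p hp) = finrank ℂ ↥p := rfl
      have e2 : finrank ℂ ↥(subrep V q hq) = finrank ℂ ↥q := rfl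
      obtain ⟨ι₁, i₁, S₁, hS₁, hc₁⟩ := IH _ (e1 ▸ h1 : finrank ℂ ↥(subrep V p hp) < n)
        (subrep V p hp) rfl
      obtain ⟨ι₂, i₂, S₂, hS₂, hc₂⟩ := IH _ (e2 ▸ h2 : finrank ℂ ↥(subrep V q hq) < n)
        (subrep V q hq) rfl
      refine ⟨ι₁ ⊕ ι₂, inferInstance, Sum.elim S₁ S₂, ?_, ?_⟩
      · rintro (t | t)
        exacts [hS₁ t, hS₂ t]
      · rw [char_add_of_isCompl V p q hp hq hpq, hc₁, hc₂, Fintype.sum_sum_type]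
        rfl


/-! ### the inner product formula -/

lemma classInner_character (V W : FDRep ℂ G) :
    classInner V.character W.character = (finrank ℂ (W ⟶ V) : ℂ) := by
  haveI : Invertible (Fintype.card G : ℂ) :=
    invertibleOfNonzero (by exact_mod_cast Fintype.card_ne_zero)
  rw [classInner, ← invOf_eq_inv, ← smul_eq_mul]
  conv_lhs =>
    enter [2, 2, g]
    rw [mul_comm, ← FDRep.char_dual, ← Pi.mul_apply, ← FDRep.char_tensor]
    rw [char_iso (FDRep.dualTensorIsoLinHom W.ρ V)]
  rw [invOf_eq_inv, smul_eq_mul, ← Nat.card_eq_fintype_card]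
  rw [average_char_eq_finrank_invariants]
  rw [show (of (linHom W.ρ V.ρ)).ρ = linHom W.ρ V.ρ from FDRep.of_ρ' (linHom W.ρ V.ρ)]
  erw [(Representation.linHom.invariantsEquivFDRepHom W V).finrank_eq]

lemma classInner_sum {ι : Type} [Fintype ι] (f : ι → (G → ℂ)) (h : G → ℂ) :
    classInner (∑ t, f t) h = ∑ t, classInner (f t) h := by
  unfold classInner
  simp only [Finset.sum_apply, Finset.sum_mul]
  rw [Finset.sum_comm, Finset.mul_sum]

lemma classInner_sum_char {ι : Type} [Fintype ι] (c : ι → FDRep ℂ G) (W : FDRep ℂ G) :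
    classInner (∑ t, (c t).character) W.character
      = ((∑ t, finrank ℂ (W ⟶ c t) : ℕ) : ℂ) := by
  rw [classInner_sum, Nat.cast_sum]
  exact Finset.sum_congr rfl fun t _ => classInner_character (c t) W

lemma mem_constituents_char_iff {V W : FDRep ℂ G} (hW : CategoryTheory.Simple W) :
    W.character ∈ constituents G V.character ↔ finrank ℂ (W ⟶ V) ≠ 0 := by
  constructor
  · rintro ⟨-, hne⟩
    rw [classInner_character] at hne
    exact_mod_cast fun h => hne (by exact_mod_cast h)
  · intro h
    refine ⟨⟨W, hW, rfl⟩, ?_⟩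
    rw [classInner_character]
    exact_mod_cast h

lemma char_mul_char (V W : FDRep ℂ G) :
    V.character * W.character = (V ⊗ W).character := (char_tensor V W).symm

/-! ### the key monotonicity lemma -/

lemma constituents_tensor_mono {A B T : FDRep ℂ G}
    (H : constituents G A.character ⊆ constituents G B.character) :
    constituents G (A.character * T.character)
      ⊆ constituents G (B.character * T.character) := by
  rintro ψ ⟨⟨S, hS, rfl⟩, hne⟩
  obtain ⟨ι, _, SA, hSA, hchA⟩ := exists_decomp A
  obtain ⟨κ, _, SB, hSB, hchB⟩ := exists_decomp B
  haveI := hS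
  haveI : ∀ t, CategoryTheory.Simple (SA t) := hSA
  haveI : ∀ u, CategoryTheory.Simple (SB u) := hSB
  have hdecA : A.character * T.character = ∑ t, (SA t ⊗ T).character := by
    rw [hchA, Finset.sum_mul]
    exact Finset.sum_congr rfl fun t _ => char_mul_char _ _
  have hdecB : B.character * T.character = ∑ u, (SB u ⊗ T).character := by
    rw [hchB, Finset.sum_mul]
    exact Finset.sum_congr rfl fun u _ => char_mul_char _ _
  -- find a simple constituent SA t₀ of A with Hom(S, SA t₀ ⊗ T) ≠ 0
  rw [hdecA, classInner_sum_char] at hne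
  have hsum : (∑ t, finrank ℂ (S ⟶ SA t ⊗ T)) ≠ 0 := by exact_mod_cast hne
  obtain ⟨t₀, -, ht₀⟩ : ∃ t ∈ Finset.univ, finrank ℂ (S ⟶ SA t ⊗ T) ≠ 0 := by
    by_contra hc
    push_neg at hc
    exact hsum (Finset.sum_eq_zero fun t ht => hc t ht)
  -- SA t₀ is a constituent of A
  have h11 : finrank ℂ (SA t₀ ⟶ SA t₀) = 1 := by
    rw [FDRep.finrank_hom_simple_simple, if_pos ⟨Iso.refl _⟩]
  have hmemA : (SA t₀).character ∈ constituents G A.character := by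
    refine ⟨⟨SA t₀, hSA t₀, rfl⟩, ?_⟩
    rw [hchA, classInner_sum_char]
    have : (∑ t, finrank ℂ (SA t₀ ⟶ SA t)) ≠ 0 := by
      intro h0
      have := Finset.sum_eq_zero_iff.mp h0 t₀ (Finset.mem_univ _)
      rw [h11] at this
      exact one_ne_zero this
    exact_mod_cast this
  obtain ⟨-, hBne⟩ := H hmemA
  rw [hchB, classInner_sum_char] at hBne
  have hBsum : (∑ u, finrank ℂ (SA t₀ ⟶ SB u)) ≠ 0 := by exact_mod_cast hBne
  obtain ⟨u₀, -, hu₀⟩ : ∃ u ∈ Finset.univ, finrank ℂ (SA t₀ ⟶ SB u) ≠ 0 := by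
    by_contra hc
    push_neg at hc
    exact hBsum (Finset.sum_eq_zero fun u hu => hc u hu)
  have hiso : Nonempty (SA t₀ ≅ SB u₀) := by
    by_contra hno
    rw [FDRep.finrank_hom_simple_simple, if_neg hno] at hu₀
    exact hu₀ rfl
  obtain ⟨e⟩ := hiso
  have hchar : (SB u₀ ⊗ T).character = (SA t₀ ⊗ T).character := by
    rw [FDRep.char_tensor, FDRep.char_tensor, char_iso e]
  have hrk : finrank ℂ (S ⟶ SB u₀ ⊗ T) = finrank ℂ (S ⟶ SA t₀ ⊗ T) := by
    have h' := classInner_character (SB u₀ ⊗ T) S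
    rw [hchar, classInner_character] at h'
    -- h' : ↑(finrank (S ⟶ SA t₀ ⊗ T)) = ↑(finrank (S ⟶ SB u₀ ⊗ T))
    exact_mod_cast h'.symm
  refine ⟨⟨S, hS, rfl⟩, ?_⟩
  rw [hdecB, classInner_sum_char]
  have : (∑ u, finrank ℂ (S ⟶ SB u ⊗ T)) ≠ 0 := by
    intro h0
    have := Finset.sum_eq_zero_iff.mp h0 u₀ (Finset.mem_univ _)
    rw [hrk] at this
    exact ht₀ this
  exact_mod_cast this


/-! ### glue -/

lemma IsChar.mul' {f h : G → ℂ} (hf : IsChar G f) (hh : IsChar G h) : IsChar G (f * h) := by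
  obtain ⟨A, rfl⟩ := hf
  obtain ⟨B, rfl⟩ := hh
  exact ⟨A ⊗ B, (char_tensor A B).symm⟩

lemma isChar_one : IsChar G 1 := by
  refine ⟨FDRep.of (Representation.trivial ℂ (G := G) (V := ℂ)), ?_⟩
  funext g
  show (1 : ℂ) = LinearMap.trace ℂ ℂ ((Representation.trivial ℂ (G := G) (V := ℂ)) g)
  have h1 : (Representation.trivial ℂ (G := G) (V := ℂ)) g = LinearMap.id := rfl
  rw [h1, LinearMap.trace_id, Module.finrank_self, Nat.cast_one]

lemma IsChar.pow' {χ : G → ℂ} (h : IsChar G χ) : ∀ k : ℕ, IsChar G (χ ^ k) := by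
  intro k
  induction k with
  | zero => rw [pow_zero]; exact isChar_one
  | succ k ih => rw [pow_succ]; exact ih.mul' h

lemma constituents_mul_mono' {α β θ : G → ℂ} (hα : IsChar G α) (hβ : IsChar G β)
    (hθ : IsChar G θ) (H : constituents G α ⊆ constituents G β) :
    constituents G (α * θ) ⊆ constituents G (β * θ) := by
  obtain ⟨A, rfl⟩ := hα
  obtain ⟨B, rfl⟩ := hβ
  obtain ⟨T, rfl⟩ := hθ
  exact constituents_tensor_mono H

end Aux

theorem constituents_pow_eq_of_eq {G : Type} [Group G] [Fintype G]
    (χ ρ : G → ℂ) (hχ : IsChar G χ) (hρ : IsChar G ρ)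
    (hsub : constituents G χ ⊆ constituents G ρ)
    (i : ℕ) (hi : 1 ≤ i)
    (heq : constituents G (χ ^ i) = constituents G (ρ ^ i)) :
    ∀ j : ℕ, i ≤ j → constituents G (χ ^ j) = constituents G (ρ ^ j) := by
  have chain : ∀ k : ℕ, constituents G (χ ^ k) ⊆ constituents G (ρ ^ k) := by
    intro k
    induction k with
    | zero => rw [pow_zero, pow_zero]
    | succ k ih =>
      rw [pow_succ, pow_succ]
      calc constituents G (χ ^ k * χ) ⊆ constituents G (ρ ^ k * χ) :=
            constituents_mul_mono' (hχ.pow' k) (hρ.pow' k) hχ ih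
        _ = constituents G (χ * ρ ^ k) := by rw [mul_comm (ρ ^ k) χ]
        _ ⊆ constituents G (ρ * ρ ^ k) :=
            constituents_mul_mono' hχ hρ (hρ.pow' k) hsub
        _ = constituents G (ρ ^ k * ρ) := by rw [mul_comm ρ (ρ ^ k)]
  have claim : constituents G (ρ * χ ^ i) ⊆ constituents G (χ ^ (i + 1)) := by
    obtain ⟨k, rfl⟩ : ∃ k, i = k + 1 := ⟨i - 1, (Nat.succ_pred_eq_of_pos hi).symm⟩
    have s1 : constituents G (ρ * χ ^ k) ⊆ constituents G (χ ^ (k + 1)) := by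
      calc constituents G (ρ * χ ^ k) = constituents G (χ ^ k * ρ) := by
            rw [mul_comm ρ (χ ^ k)]
        _ ⊆ constituents G (ρ ^ k * ρ) :=
            constituents_mul_mono' (hχ.pow' k) (hρ.pow' k) hρ (chain k)
        _ = constituents G (ρ ^ (k + 1)) := by rw [pow_succ]
        _ = constituents G (χ ^ (k + 1)) := heq.symm
    calc constituents G (ρ * χ ^ (k + 1)) = constituents G ((ρ * χ ^ k) * χ) := by
          rw [pow_succ, ← mul_assoc]
      _ ⊆ constituents G (χ ^ (k + 1) * χ) :=
          constituents_mul_mono' (hρ.mul' (hχ.pow' k)) (hχ.pow' (k + 1)) hχ s1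
      _ = constituents G (χ ^ (k + 1 + 1)) := by rw [pow_succ χ (k + 1)]
  intro j hij
  induction j, hij using Nat.le_induction with
  | base => exact heq
  | succ j hij ihj =>
    have hji : i + (j - i) = j := Nat.add_sub_cancel' hij
    apply Set.Subset.antisymm
    · exact chain (j + 1)
    · have e1 : constituents G (ρ ^ (j + 1)) = constituents G (χ ^ j * ρ) := by
        apply Set.Subset.antisymm
        · rw [pow_succ]
          exact constituents_mul_mono' (hρ.pow' j) (hχ.pow' j) hρ (by rw [ihj])
        · rw [pow_succ]
          exact constituents_mul_mono' (hχ.pow' j) (hρ.pow' j) hρ (by rw [ihj])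
      calc constituents G (ρ ^ (j + 1)) = constituents G (χ ^ j * ρ) := e1
        _ = constituents G ((ρ * χ ^ i) * χ ^ (j - i)) := by
            rw [show χ ^ j = χ ^ i * χ ^ (j - i) by rw [← pow_add, hji],
              mul_comm (χ ^ i * χ ^ (j - i)) ρ, ← mul_assoc]
        _ ⊆ constituents G (χ ^ (i + 1) * χ ^ (j - i)) :=
            constituents_mul_mono' (hρ.mul' (hχ.pow' i)) (hχ.pow' (i + 1)) (hχ.pow' (j - i)) claim
        _ = constituents G (χ ^ (j + 1)) := by
            rw [← pow_add, show i + 1 + (j - i) = j + 1 by omega]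

end CharCover
end
end

section
/- Let 1 ≤ k ≤ ⌊n/2⌋ and λ = (n−k, k). Then the covering number of the permutation character σ_λ of S_n is at least ⌈2(n−1)/(k+1)⌉. -/
open scoped Classical BigOperators

noncomputable section

namespace CharCover

abbrev PartN (n : ℕ) := Nat.Partition n

/-- The `i`-th largest part of a partition (0-indexed), `0` if out of range. -/
def part {n : ℕ} (μ : PartN n) (i : ℕ) : ℕ :=
  ((μ.parts.sort (· ≤ ·)).reverse).getD i 0

/-- `dd t μ` is the number of indices `i` with `μ_i − μ_{i+1} ≥ t`. -/
def dd (t : ℕ) {n : ℕ} (μ : PartN n) : ℕ :=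
  ((Finset.range n).filter (fun i => part μ (i + 1) + t ≤ part μ i)).card

/-- The `i`-th part (0-indexed) of the conjugate partition: the number of parts `≥ i+1`. -/
def conjPart {n : ℕ} (μ : PartN n) (i : ℕ) : ℕ :=
  Multiset.countP (fun a => i + 1 ≤ a) μ.parts

/-- `ddConj t μ` is the number of indices `i` with `μ'_i − μ'_{i+1} ≥ t` for the conjugate. -/
def ddConj (t : ℕ) {n : ℕ} (μ : PartN n) : ℕ :=
  ((Finset.range n).filter (fun i => conjPart μ (i + 1) + t ≤ conjPart μ i)).card

/-- The Durfee rank of a partition: the size of the largest square in its Young diagram. -/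
def durfee {n : ℕ} (μ : PartN n) : ℕ :=
  ((Finset.range n).filter (fun i => i + 1 ≤ part μ i)).card

/-- The permutation character of `S_n` acting on ordered systems of pairwise disjoint
`g`-invariant blocks of sizes `c i`: for `∑ c i = n` this is the character induced from the
trivial character of the Young subgroup of type `c`. -/
def permCharI {n : ℕ} {ι : Type} (c : ι → ℕ) (g : Equiv.Perm (Fin n)) : ℂ :=
  Nat.card {P : ι → Finset (Fin n) //
    (∀ i, (P i).card = c i) ∧ (∀ i j, i ≠ j → Disjoint (P i) (P j)) ∧
    (∀ i, (P i).image g = P i)}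

/-- `σ_μ`, the character of `S_n` induced from the trivial character of the Young subgroup. -/
def sigmaChar {n : ℕ} (μ : PartN n) : Equiv.Perm (Fin n) → ℂ :=
  permCharI (fun i : Fin n => part μ i)

/-- The irreducible character `χ_μ` of `S_n`, via the Jacobi–Trudi determinant
`χ_μ = ∑_σ sgn(σ) σ_{(μ_i + σ(i) - i)_i}` (terms with a negative entry vanish). -/
def irrChar {n : ℕ} (μ : PartN n) : Equiv.Perm (Fin n) → ℂ := fun g =>
  ∑ σ : Equiv.Perm (Fin n),
    ((Equiv.Perm.sign σ : ℤ) : ℂ) *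
      (if ∀ i : Fin n, (i : ℕ) ≤ part μ i + (σ i : ℕ) then
        permCharI (fun i : Fin n => part μ i + ((σ i : ℕ)) - (i : ℕ)) g
      else 0)

/-- The two-row partition `(n-k, k)`. -/
def twoRowP (n k : ℕ) (h1 : 0 < k) (h2 : k < n) : PartN n :=
  ⟨{n - k, k}, by intro i hi; simp at hi; omega, by simp; omega⟩

/-- The hook partition `(n-k, 1^k)`. -/
def hookP (n k : ℕ) (h : k < n) : PartN n :=
  ⟨(n - k) ::ₘ Multiset.replicate k 1, by
    intro i hi
    simp [Multiset.mem_replicate] at hi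
    omega, by
    simp [Multiset.sum_replicate]
    omega⟩

/-- The index of the block of the canonical set partition of type `μ` containing `x`. -/
def blockIdx {n : ℕ} (μ : PartN n) (x : Fin n) : ℕ :=
  ((Finset.range n).filter (fun k => ∑ j ∈ Finset.range (k + 1), part μ j ≤ (x : ℕ))).card

/-- The Young subgroup `S_μ ≤ S_n`: permutations preserving each block of the canonical
set partition of type `μ`. -/
def youngSubgroup {n : ℕ} (μ : PartN n) : Subgroup (Equiv.Perm (Fin n)) where
  carrier := {g | ∀ i : Fin n, blockIdx μ (g i) = blockIdx μ i}
  one_mem' := by intro i; simp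
  mul_mem' := by
    intro a b ha hb i
    simp only [Set.mem_setOf_eq] at ha hb ⊢
    rw [Equiv.Perm.mul_apply, ha, hb]
  inv_mem' := by
    intro a ha i
    simp only [Set.mem_setOf_eq] at ha ⊢
    simpa using (ha (a⁻¹ i)).symm

/-- Inner product of the restrictions to a subgroup `H`. -/
def subInner {G : Type*} [Group G] [Fintype G] (H : Subgroup G) (f h : G → ℂ) : ℂ :=
  (Nat.card H : ℂ)⁻¹ * ∑ x : H, f (x : G) * h (((x⁻¹ : H) : G))

/-- The canonical embedding `S_a × S_b → S_n` when `a + b = n`. -/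
def embedPerm {a b n : ℕ} (h : a + b = n) (x : Equiv.Perm (Fin a)) (y : Equiv.Perm (Fin b)) :
    Equiv.Perm (Fin n) :=
  ((finSumFinEquiv.trans (finCongr h)).permCongr) (Equiv.sumCongr x y)

/-- The Littlewood–Richardson coefficient
`c^λ_{αβ} = ⟨Res_{S_a × S_b} χ_λ, χ_α ⊗ χ_β⟩`. -/
def lr {a b n : ℕ} (h : a + b = n) (lam : PartN n) (α : PartN a) (β : PartN b) : ℂ :=
  ((Nat.factorial a * Nat.factorial b : ℕ) : ℂ)⁻¹ *
    ∑ x : Equiv.Perm (Fin a), ∑ y : Equiv.Perm (Fin b),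
      irrChar lam (embedPerm h x y) * irrChar α x⁻¹ * irrChar β y⁻¹

/-- The Kronecker coefficient `g_{μνλ} = ⟨χ_μ χ_ν, χ_λ⟩`. -/
def kron {n : ℕ} (μ ν lam : PartN n) : ℂ :=
  classInner (fun g => irrChar μ g * irrChar ν g) (irrChar lam)

lemma sum_countP (n : ℕ) (s : Multiset ℕ) (hs : ∀ a ∈ s, a ≤ n) :
    ∑ i ∈ Finset.range n, Multiset.countP (fun a => i + 1 ≤ a) s = s.sum := by
  induction s using Multiset.induction with
  | empty => simp
  | cons a s ih =>
      have ha : a ≤ n := hs a (Multiset.mem_cons_self a s)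
      have hs' : ∀ b ∈ s, b ≤ n := fun b hb => hs b (Multiset.mem_cons_of_mem hb)
      simp only [Multiset.countP_cons, Multiset.sum_cons]
      rw [Finset.sum_add_distrib, ih hs']
      have h3 : ∑ i ∈ Finset.range n, (if i + 1 ≤ a then 1 else 0) = a := by
        rw [Finset.sum_boole]
        have h2 : (Finset.range n).filter (fun i => i + 1 ≤ a) = Finset.range a := by
          ext i; simp only [Finset.mem_filter, Finset.mem_range]; omega
        rw [h2, Finset.card_range]
        simp
      omega

/-- The conjugate (transpose) partition. -/
def conjP {n : ℕ} (μ : PartN n) : PartN n where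
  parts := (Multiset.map (fun i => conjPart μ i) (Finset.range n).val).filter (0 < ·)
  parts_pos := fun {i} hi => (Multiset.mem_filter.mp hi).2
  parts_sum := by
    set t := Multiset.map (fun i => conjPart μ i) (Finset.range n).val with ht
    have h1 : (t.filter (0 < ·)).sum + (t.filter (fun a => ¬ 0 < a)).sum = t.sum := by
      rw [← Multiset.sum_add, Multiset.filter_add_not]
    have h2 : (t.filter (fun a => ¬ 0 < a)).sum = 0 := by
      apply Multiset.sum_eq_zero
      intro x hx
      have := (Multiset.mem_filter.mp hx).2
      omega
    have h3 : t.sum = ∑ i ∈ Finset.range n, conjPart μ i := by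
      rw [Finset.sum_eq_multiset_sum]
    have h4 : ∑ i ∈ Finset.range n, conjPart μ i = n := by
      have hle : ∀ a ∈ μ.parts, a ≤ n := by
        intro a ha
        have h5 := Multiset.single_le_sum (fun x _ => Nat.zero_le x) a ha
        rw [μ.parts_sum] at h5
        exact h5
      simp only [conjPart]
      rw [sum_countP n μ.parts hle]
      exact μ.parts_sum
    omega


section AuxSign
variable {n : ℕ}

/-- invariance of a finset under a permutation -/
def InvSet (g : Equiv.Perm (Fin n)) (B : Finset (Fin n)) : Prop := B.image g = B

lemma inv_iff_mem {g : Equiv.Perm (Fin n)} {B : Finset (Fin n)} :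
    InvSet g B ↔ ∀ x ∈ B, g x ∈ B := by
  constructor
  · intro h x hx
    rw [InvSet] at h
    rw [← h]
    exact Finset.mem_image_of_mem _ hx
  · intro h
    apply Finset.eq_of_subset_of_card_le
    · intro y hy
      rcases Finset.mem_image.mp hy with ⟨x, hx, rfl⟩
      exact h x hx
    · rw [Finset.card_image_of_injective _ g.injective]

lemma inv_inv_perm {g : Equiv.Perm (Fin n)} {B : Finset (Fin n)} (h : InvSet g B) :
    ∀ x ∈ B, g⁻¹ x ∈ B := by
  intro x hx
  rw [InvSet] at h
  rw [← h] at hx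
  rcases Finset.mem_image.mp hx with ⟨z, hz, hzx⟩
  have : g⁻¹ x = z := by rw [← hzx]; simp
  rwa [this]

lemma inv_zpow_mem {g : Equiv.Perm (Fin n)} {B : Finset (Fin n)} (h : InvSet g B) :
    ∀ (i : ℤ), ∀ x ∈ B, (g ^ i) x ∈ B := by
  intro i
  induction i using Int.induction_on with
  | zero => simpa using fun x hx => hx
  | succ i ih =>
      intro x hx
      have : (g ^ ((i : ℤ) + 1)) x = g ((g ^ (i : ℤ)) x) := by
        rw [add_comm, zpow_add, zpow_one, Equiv.Perm.mul_apply]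
      rw [this]
      exact (inv_iff_mem.mp h) _ (ih x hx)
  | pred i ih =>
      intro x hx
      have : (g ^ (-(i : ℤ) - 1)) x = g⁻¹ ((g ^ (-(i : ℤ))) x) := by
        rw [sub_eq_add_neg, add_comm, zpow_add, zpow_neg, zpow_one, Equiv.Perm.mul_apply]
      rw [this]
      exact inv_inv_perm h _ (ih x hx)

/-- the orbit of `x` under `g`, as a finset -/
def orb (g : Equiv.Perm (Fin n)) (x : Fin n) : Finset (Fin n) :=
  Finset.univ.filter (fun y => g.SameCycle x y)

lemma mem_orb {g : Equiv.Perm (Fin n)} {x y : Fin n} :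
    y ∈ orb g x ↔ g.SameCycle x y := by simp [orb]

lemma self_mem_orb {g : Equiv.Perm (Fin n)} {x : Fin n} : x ∈ orb g x :=
  mem_orb.mpr (Equiv.Perm.SameCycle.refl g x)

lemma orb_eq_of_mem {g : Equiv.Perm (Fin n)} {x y : Fin n} (h : y ∈ orb g x) :
    orb g x = orb g y := by
  have hxy : g.SameCycle x y := mem_orb.mp h
  ext z
  simp only [mem_orb]
  exact ⟨fun hz => hxy.symm.trans hz, fun hz => hxy.trans hz⟩

lemma orb_nonempty {g : Equiv.Perm (Fin n)} {x : Fin n} : (orb g x).Nonempty :=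
  ⟨x, self_mem_orb⟩

lemma inv_orb {g : Equiv.Perm (Fin n)} {x : Fin n} : InvSet g (orb g x) := by
  rw [inv_iff_mem]
  intro y hy
  rw [mem_orb] at hy ⊢
  rcases hy with ⟨i, hi⟩
  exact ⟨i + 1, by rw [add_comm, zpow_add, zpow_one, Equiv.Perm.mul_apply, hi]⟩

lemma orb_subset_of_inv {g : Equiv.Perm (Fin n)} {B : Finset (Fin n)} (h : InvSet g B)
    {x : Fin n} (hx : x ∈ B) : orb g x ⊆ B := by
  intro y hy
  rcases mem_orb.mp hy with ⟨i, hi⟩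
  rw [← hi]
  exact inv_zpow_mem h i x hx

/-- the number of orbits of `g` inside `A` -/
def nOrb (g : Equiv.Perm (Fin n)) (A : Finset (Fin n)) : ℕ := (A.image (orb g)).card

lemma nOrb_empty {g : Equiv.Perm (Fin n)} : nOrb g ∅ = 0 := by simp [nOrb]

lemma inv_sdiff {g : Equiv.Perm (Fin n)} {A B : Finset (Fin n)} (hA : InvSet g A) (hB : InvSet g B) :
    InvSet g (A \ B) := by
  rw [inv_iff_mem]
  intro x hx
  rw [Finset.mem_sdiff] at hx ⊢
  refine ⟨inv_iff_mem.mp hA x hx.1, fun h => hx.2 ?_⟩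
  have := inv_inv_perm hB _ h
  simpa using this

lemma orbimage_sdiff {g : Equiv.Perm (Fin n)} {A B : Finset (Fin n)}
    (hB : InvSet g B) (hBA : B ⊆ A) :
    (A \ B).image (orb g) = A.image (orb g) \ B.image (orb g) := by
  ext o
  simp only [Finset.mem_image, Finset.mem_sdiff]
  constructor
  · rintro ⟨a, ⟨ha1, ha2⟩, rfl⟩
    refine ⟨⟨a, ha1, rfl⟩, ?_⟩
    rintro ⟨b, hb, hba⟩
    have : a ∈ orb g b := by rw [hba]; exact self_mem_orb
    exact ha2 (orb_subset_of_inv hB hb this)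
  · rintro ⟨⟨a, ha, rfl⟩, h2⟩
    exact ⟨a, ⟨ha, fun hb => h2 ⟨a, hb, rfl⟩⟩, rfl⟩

lemma nOrb_sdiff {g : Equiv.Perm (Fin n)} {A B : Finset (Fin n)}
    (hB : InvSet g B) (hBA : B ⊆ A) :
    nOrb g (A \ B) = nOrb g A - nOrb g B ∧ nOrb g B ≤ nOrb g A := by
  have him : B.image (orb g) ⊆ A.image (orb g) := Finset.image_subset_image hBA
  constructor
  · rw [nOrb, nOrb, nOrb, orbimage_sdiff hB hBA, Finset.card_sdiff_of_subset him]
  · exact Finset.card_le_card him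


lemma biUnion_orbimage {g : Equiv.Perm (Fin n)} {B : Finset (Fin n)} (hB : InvSet g B) :
    (B.image (orb g)).biUnion id = B := by
  ext x
  simp only [Finset.mem_biUnion, Finset.mem_image, id]
  constructor
  · rintro ⟨o, ⟨b, hb, rfl⟩, hx⟩
    exact orb_subset_of_inv hB hb hx
  · intro hx
    exact ⟨orb g x, ⟨x, hx, rfl⟩, self_mem_orb⟩

lemma orbimage_biUnion {g : Equiv.Perm (Fin n)} {A : Finset (Fin n)}
    {S : Finset (Finset (Fin n))} (hS : S ⊆ A.image (orb g)) :
    (S.biUnion id).image (orb g) = S := by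
  ext o
  simp only [Finset.mem_image, Finset.mem_biUnion, id]
  constructor
  · rintro ⟨x, ⟨o', ho', hx⟩, rfl⟩
    rcases Finset.mem_image.mp (hS ho') with ⟨a, ha, rfl⟩
    rwa [← orb_eq_of_mem hx]
  · intro ho
    rcases Finset.mem_image.mp (hS ho) with ⟨a, _, rfl⟩
    exact ⟨a, ⟨orb g a, ho, self_mem_orb⟩, rfl⟩

lemma inv_biUnion {g : Equiv.Perm (Fin n)} {S : Finset (Finset (Fin n))}
    (h : ∀ o ∈ S, InvSet g o) : InvSet g (S.biUnion id) := by
  rw [inv_iff_mem]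
  intro x hx
  rcases Finset.mem_biUnion.mp hx with ⟨o, ho, hxo⟩
  exact Finset.mem_biUnion.mpr ⟨o, ho, inv_iff_mem.mp (h o ho) x hxo⟩

/-- key alternating sum over nonempty invariant subsets -/
lemma sum_neg_one_nOrb {g : Equiv.Perm (Fin n)} {A : Finset (Fin n)}
    (hA : InvSet g A) (hne : A.Nonempty) :
    ∑ B ∈ A.powerset.filter (fun B => B.Nonempty ∧ InvSet g B),
      (-1 : ℂ) ^ (nOrb g B) = -1 := by
  have key : ∑ B ∈ A.powerset.filter (fun B => B.Nonempty ∧ InvSet g B),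
      (-1 : ℂ) ^ (nOrb g B)
      = ∑ S ∈ (A.image (orb g)).powerset.filter (fun S => S.Nonempty),
        (-1 : ℂ) ^ S.card := by
    apply Finset.sum_nbij' (i := fun B => B.image (orb g)) (j := fun S => S.biUnion id)
    · intro B hB
      simp only [Finset.mem_filter, Finset.mem_powerset] at hB ⊢
      refine ⟨Finset.image_subset_image hB.1, hB.2.1.image _⟩
    · intro S hS
      simp only [Finset.mem_filter, Finset.mem_powerset] at hS ⊢
      have hsub : S.biUnion id ⊆ A := by
        intro x hx
        rcases Finset.mem_biUnion.mp hx with ⟨o, ho, hxo⟩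
        rcases Finset.mem_image.mp (hS.1 ho) with ⟨a, ha, rfl⟩
        exact orb_subset_of_inv hA ha hxo
      have hinv : InvSet g (S.biUnion id) := by
        apply inv_biUnion
        intro o ho
        rcases Finset.mem_image.mp (hS.1 ho) with ⟨a, _, rfl⟩
        exact inv_orb
      refine ⟨hsub, ?_, hinv⟩
      rcases hS.2 with ⟨o, ho⟩
      rcases Finset.mem_image.mp (hS.1 ho) with ⟨a, _, rfl⟩
      exact ⟨a, Finset.mem_biUnion.mpr ⟨orb g a, ho, self_mem_orb⟩⟩
    · intro B hB
      simp only [Finset.mem_filter, Finset.mem_powerset] at hB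
      exact biUnion_orbimage hB.2.2
    · intro S hS
      simp only [Finset.mem_filter, Finset.mem_powerset] at hS
      exact orbimage_biUnion hS.1
    · intro B _
      rfl
  rw [key]
  have h0 : ∑ S ∈ (A.image (orb g)).powerset, (-1 : ℂ) ^ S.card = 0 := by
    have := Finset.sum_powerset_neg_one_pow_card_of_nonempty (x := A.image (orb g))
      (hne.image _)
    calc ∑ S ∈ (A.image (orb g)).powerset, (-1 : ℂ) ^ S.card
        = ((∑ S ∈ (A.image (orb g)).powerset, (-1 : ℤ) ^ S.card : ℤ) : ℂ) := by
          push_cast; rfl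
      _ = 0 := by rw [this]; simp
  have hsplit : (A.image (orb g)).powerset =
      ((A.image (orb g)).powerset.filter (fun S => S.Nonempty)) ∪ {∅} := by
    ext S
    simp only [Finset.mem_union, Finset.mem_filter, Finset.mem_singleton, Finset.mem_powerset]
    constructor
    · intro h
      rcases S.eq_empty_or_nonempty with h1 | h1
      · exact Or.inr h1
      · exact Or.inl ⟨h, h1⟩
    · rintro (⟨h, _⟩ | rfl)
      · exact h
      · exact Finset.empty_subset _
  have hdisj : Disjoint ((A.image (orb g)).powerset.filter (fun S => S.Nonempty))
      ({∅} : Finset (Finset (Finset (Fin n)))) := by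
    rw [Finset.disjoint_singleton_right, Finset.mem_filter]
    rintro ⟨_, h⟩
    exact h.ne_empty rfl
  have := Finset.sum_union (f := fun S : Finset (Finset (Fin n)) => (-1 : ℂ) ^ S.card) hdisj
  rw [hsplit, this] at h0
  simp only [Finset.sum_singleton, Finset.card_empty, pow_zero] at h0
  linear_combination h0

lemma card_val_lt {m : ℕ} (hm : m ≤ n) :
    (Finset.univ.filter (fun w : Fin n => (w : ℕ) < m)).card = m := by
  have himg : (Finset.univ.filter (fun w : Fin n => (w : ℕ) < m)).image Fin.val
      = Finset.range m := by
    ext a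
    simp only [Finset.mem_image, Finset.mem_filter, Finset.mem_univ, true_and,
      Finset.mem_range]
    constructor
    · rintro ⟨w, hw, rfl⟩; exact hw
    · intro ha; exact ⟨⟨a, lt_of_lt_of_le ha hm⟩, ha, rfl⟩
  calc (Finset.univ.filter (fun w : Fin n => (w : ℕ) < m)).card
      = ((Finset.univ.filter (fun w : Fin n => (w : ℕ) < m)).image Fin.val).card :=
        (Finset.card_image_of_injective _ Fin.val_injective).symm
    _ = (Finset.range m).card := by rw [himg]
    _ = m := Finset.card_range m

lemma eq_id_of_le (σ : Equiv.Perm (Fin n)) (h : ∀ i : Fin n, (σ i : ℕ) ≤ (i : ℕ)) :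
    ∀ i, σ i = i := by
  have key : ∀ m : ℕ, ∀ i : Fin n, (i : ℕ) = m → σ i = i := by
    intro m
    induction m using Nat.strong_induction_on with
    | _ m ih =>
    intro i him
    rcases lt_or_eq_of_le (h i) with hlt | heq
    · exfalso
      have h1 : σ (σ i) = σ i := ih ((σ i : ℕ)) (by omega) (σ i) rfl
      have := σ.injective h1
      rw [this] at hlt
      exact lt_irrefl _ hlt
    · exact Fin.ext heq
  exact fun i => key (i : ℕ) i rfl

/-- Sign of a permutation with σ(i) ≥ i - 1 equals (-1)^(n - #{i : σ i ≥ i}). -/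
lemma lemS (M : ℕ) : ∀ (σ : Equiv.Perm (Fin n)),
    (∀ i : Fin n, (i : ℕ) ≤ (σ i : ℕ) + 1) →
    (∑ i : Fin n, ((σ i : ℕ) - (i : ℕ))) = M →
    (Equiv.Perm.sign σ : ℤ) =
      (-1) ^ (n - (Finset.univ.filter (fun i : Fin n => (i : ℕ) ≤ (σ i : ℕ))).card) := by
  induction M using Nat.strong_induction_on with
  | _ M ih =>
  intro σ hσ hM
  rcases Nat.eq_zero_or_pos M with rfl | hMpos
  · -- base case : σ = id
    have hle : ∀ i : Fin n, (σ i : ℕ) ≤ (i : ℕ) := by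
      intro i
      by_contra hc
      push_neg at hc
      have : 0 < (σ i : ℕ) - (i : ℕ) := by omega
      have hle0 : (∑ i : Fin n, ((σ i : ℕ) - (i : ℕ))) > 0 :=
        Finset.sum_pos' (fun j _ => Nat.zero_le _) ⟨i, Finset.mem_univ i, this⟩
      omega
    have hid : σ = 1 := by
      ext i
      exact congrArg Fin.val (eq_id_of_le σ hle i)
    subst hid
    have : (Finset.univ.filter (fun i : Fin n => (i : ℕ) ≤ ((1 : Equiv.Perm (Fin n)) i : ℕ))) =
        Finset.univ := by
      apply Finset.filter_true_of_mem
      intro i _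
      simp
    rw [this]
    simp
  · -- step
    have hex : ∃ i : Fin n, (i : ℕ) < (σ i : ℕ) := by
      by_contra hc
      push_neg at hc
      have : (∑ i : Fin n, ((σ i : ℕ) - (i : ℕ))) = 0 :=
        Finset.sum_eq_zero (fun i _ => by have := hc i; omega)
      omega
    obtain ⟨i, hi⟩ := hex
    set v : Fin n := σ i with hv
    have hv1 : 1 ≤ (v : ℕ) := by omega
    have hu : (v : ℕ) - 1 < n := by omega
    set u : Fin n := ⟨(v : ℕ) - 1, hu⟩ with hudef
    set j₀ : Fin n := σ.symm u with hj₀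
    have hσj₀ : σ j₀ = u := σ.apply_symm_apply u
    have hj₀i : j₀ ≠ i := by
      intro hcon
      rw [hcon] at hσj₀
      rw [← hv] at hσj₀
      have : (v : ℕ) = (u : ℕ) := congrArg Fin.val hσj₀
      simp only [hudef] at this
      omega
    have hj₀le : (j₀ : ℕ) ≤ (v : ℕ) := by
      have := hσ j₀
      rw [hσj₀] at this
      simp only [hudef] at this
      omega
    -- pigeonhole : exclude j₀ < v
    have hj₀v : (j₀ : ℕ) = (v : ℕ) := by
      by_contra hc
      have hj₀lt : (j₀ : ℕ) < (v : ℕ) := by omega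
      have hiv : (i : ℕ) < (v : ℕ) := hi
      -- the two elements i, j₀ lie in filter (< v)
      set X := Finset.univ.filter (fun w : Fin n => (w : ℕ) < (v : ℕ)) with hX
      have hiX : i ∈ X := Finset.mem_filter.mpr ⟨Finset.mem_univ _, hiv⟩
      have hj₀X : j₀ ∈ X := Finset.mem_filter.mpr ⟨Finset.mem_univ _, hj₀lt⟩
      have hijX : ({i, j₀} : Finset (Fin n)) ⊆ X := by
        intro w hw
        rcases Finset.mem_insert.mp hw with rfl | hw
        · exact hiX
        · rw [Finset.mem_singleton.mp hw]; exact hj₀X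
      have hcard2 : ({i, j₀} : Finset (Fin n)).card = 2 := by
        rw [Finset.card_insert_of_notMem (by simp [Ne.symm hj₀i]), Finset.card_singleton]
      have hXcard : X.card = (v : ℕ) := card_val_lt (le_of_lt v.isLt)
      have hv2 : 2 ≤ (v : ℕ) := by
        have := Finset.card_le_card hijX
        omega
      -- injection from values < v - 1 into X \ {i, j₀}
      set V := Finset.univ.filter (fun w : Fin n => (w : ℕ) < (v : ℕ) - 1) with hV
      have hVcard : V.card = (v : ℕ) - 1 := card_val_lt (by omega)
      have hmap : ∀ w ∈ V, σ.symm w ∈ X \ ({i, j₀} : Finset (Fin n)) := by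
        intro w hw
        simp only [hV, Finset.mem_filter] at hw
        have hw2 : (w : ℕ) < (v : ℕ) - 1 := hw.2
        have h1 : (σ.symm w : ℕ) ≤ (w : ℕ) + 1 := by
          have := hσ (σ.symm w)
          rw [σ.apply_symm_apply] at this
          omega
        rw [Finset.mem_sdiff]
        constructor
        · simp only [hX, Finset.mem_filter]
          exact ⟨Finset.mem_univ _, by omega⟩
        · intro hcon
          rcases Finset.mem_insert.mp hcon with hcon | hcon
          · have : σ (σ.symm w) = σ i := by rw [hcon]
            rw [σ.apply_symm_apply, ← hv] at this
            rw [this] at hw2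
            omega
          · rw [Finset.mem_singleton] at hcon
            have : σ (σ.symm w) = σ j₀ := by rw [hcon]
            rw [σ.apply_symm_apply, hσj₀] at this
            have : (w : ℕ) = (v : ℕ) - 1 := congrArg Fin.val this
            omega
      have hinj : Set.InjOn σ.symm V := fun a _ b _ hab => σ.symm.injective hab
      have hle := Finset.card_le_card_of_injOn σ.symm hmap hinj
      rw [hVcard, Finset.card_sdiff_of_subset hijX, hXcard, hcard2] at hle
      omega
    have hj₀eq : j₀ = v := Fin.ext hj₀v
    have huv : u ≠ v := by
      intro hcon
      have := congrArg Fin.val hcon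
      simp only [hudef] at this
      omega
    -- the new permutation
    set σ' : Equiv.Perm (Fin n) := (Equiv.swap u v) * σ with hσ'
    have happ : ∀ x : Fin n, σ' x = Equiv.swap u v (σ x) := fun x => rfl
    have hσ'i : σ' i = u := by rw [happ, ← hv, Equiv.swap_apply_right]
    have hσv : σ v = u := by rw [← hj₀eq]; exact hσj₀
    have hσ'v : σ' v = v := by
      rw [happ, hσv, Equiv.swap_apply_left]
    have hother : ∀ x : Fin n, x ≠ i → x ≠ v → σ' x = σ x := by
      intro x hxi hxv
      rw [happ]
      apply Equiv.swap_apply_of_ne_of_ne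
      · intro hcon
        have : x = j₀ := σ.injective (by rw [hσj₀]; exact hcon)
        rw [hj₀eq] at this
        exact hxv this
      · intro hcon
        have : x = i := σ.injective (by rw [hcon, hv])
        exact hxi this
    -- premise for σ'
    have hσ'prem : ∀ x : Fin n, (x : ℕ) ≤ (σ' x : ℕ) + 1 := by
      intro x
      rcases eq_or_ne x i with rfl | hxi
      · rw [hσ'i]; simp only [hudef]; omega
      · rcases eq_or_ne x v with rfl | hxv
        · rw [hσ'v]; omega
        · rw [hother x hxi hxv]; exact hσ x
    -- measure decreases by 1
    have hMdec : (∑ x : Fin n, ((σ' x : ℕ) - (x : ℕ))) = M - 1 := by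
      have hterm : ∀ x : Fin n, x ≠ i → ((σ' x : ℕ) - (x : ℕ)) = ((σ x : ℕ) - (x : ℕ)) := by
        intro x hxi
        rcases eq_or_ne x v with rfl | hxv
        · rw [hσ'v, hσv]
          simp only [hudef]
          omega
        · rw [hother x hxi hxv]
      have hi' : ((σ i : ℕ) - (i : ℕ)) = ((σ' i : ℕ) - (i : ℕ)) + 1 := by
        rw [hσ'i, ← hv]
        simp only [hudef]
        omega
      have e1 : ((σ i : ℕ) - (i : ℕ)) + ∑ x ∈ Finset.univ.erase i, ((σ x : ℕ) - (x : ℕ))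
          = ∑ x : Fin n, ((σ x : ℕ) - (x : ℕ)) :=
        Finset.add_sum_erase Finset.univ (fun x : Fin n => ((σ x : ℕ) - (x : ℕ)))
          (Finset.mem_univ i)
      have e2 : ((σ' i : ℕ) - (i : ℕ)) + ∑ x ∈ Finset.univ.erase i, ((σ' x : ℕ) - (x : ℕ))
          = ∑ x : Fin n, ((σ' x : ℕ) - (x : ℕ)) :=
        Finset.add_sum_erase Finset.univ (fun x : Fin n => ((σ' x : ℕ) - (x : ℕ)))
          (Finset.mem_univ i)
      have e3 : ∑ x ∈ Finset.univ.erase i, ((σ x : ℕ) - (x : ℕ))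
          = ∑ x ∈ Finset.univ.erase i, ((σ' x : ℕ) - (x : ℕ)) := by
        apply Finset.sum_congr rfl
        intro x hx
        exact (hterm x (Finset.ne_of_mem_erase hx)).symm
      omega
    -- starts count increases by 1
    have hfilter : Finset.univ.filter (fun x : Fin n => (x : ℕ) ≤ (σ' x : ℕ))
        = insert v (Finset.univ.filter (fun x : Fin n => (x : ℕ) ≤ (σ x : ℕ))) := by
      ext x
      simp only [Finset.mem_insert, Finset.mem_filter, Finset.mem_univ, true_and]
      rcases eq_or_ne x v with rfl | hxv
      · simp [hσ'v]
      · rcases eq_or_ne x i with rfl | hxi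
        · rw [hσ'i]
          simp only [hudef]
          constructor
          · intro _; right; omega
          · intro _; omega
        · rw [hother x hxi hxv]
          constructor
          · intro h'; right; exact h'
          · rintro (rfl | h')
            · exact absurd rfl hxv
            · exact h'
    have hvnot : v ∉ Finset.univ.filter (fun x : Fin n => (x : ℕ) ≤ (σ x : ℕ)) := by
      simp only [Finset.mem_filter, Finset.mem_univ, true_and]
      rw [hσv]
      simp only [hudef]
      omega
    have hecard : (Finset.univ.filter (fun x : Fin n => (x : ℕ) ≤ (σ' x : ℕ))).card
        = (Finset.univ.filter (fun x : Fin n => (x : ℕ) ≤ (σ x : ℕ))).card + 1 := by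
      rw [hfilter, Finset.card_insert_of_notMem hvnot]
    -- e σ ≤ n - 1
    have hefle : (Finset.univ.filter (fun x : Fin n => (x : ℕ) ≤ (σ x : ℕ))).card + 1 ≤ n := by
      have : Finset.univ.filter (fun x : Fin n => (x : ℕ) ≤ (σ x : ℕ)) ⊆
          Finset.univ.erase v := by
        intro x hx
        rw [Finset.mem_erase]
        exact ⟨fun hcon => hvnot (hcon ▸ hx), Finset.mem_univ x⟩
      have h2 := Finset.card_le_card this
      rw [Finset.card_erase_of_mem (Finset.mem_univ v), Finset.card_univ, Fintype.card_fin] at h2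
      have : 0 < n := by omega
      omega
    -- conclude by the induction hypothesis
    have hIH := ih (M - 1) (by omega) σ' hσ'prem hMdec
    have hsign : Equiv.Perm.sign σ' = - Equiv.Perm.sign σ := by
      rw [hσ']
      rw [Equiv.Perm.sign_mul, Equiv.Perm.sign_swap huv]
      simp
    rw [hsign] at hIH
    rw [hecard] at hIH
    have hpow : (n - (Finset.univ.filter (fun x : Fin n => (x : ℕ) ≤ (σ x : ℕ))).card)
        = (n - ((Finset.univ.filter (fun x : Fin n => (x : ℕ) ≤ (σ x : ℕ))).card + 1)) + 1 := by
      omega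
    rw [hpow, pow_succ]
    push_cast at hIH ⊢
    linarith [hIH]

/-- prefix sums of block sizes -/
def pref (P : Fin n → Finset (Fin n)) (m : ℕ) : ℕ :=
  ∑ i ∈ Finset.univ.filter (fun i : Fin n => (i : ℕ) < m), (P i).card

def PD (P : Fin n → Finset (Fin n)) : Prop := ∀ i j, i ≠ j → Disjoint (P i) (P j)
def AllInv (g : Equiv.Perm (Fin n)) (P : Fin n → Finset (Fin n)) : Prop :=
  ∀ i, (P i).image g = P i
def ZeroLow (a : ℕ) (P : Fin n → Finset (Fin n)) : Prop :=
  ∀ j : Fin n, (j : ℕ) < a → P j = ∅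
def SCond (a : ℕ) (P : Fin n → Finset (Fin n)) : Prop :=
  ∀ j : Fin n, P j ≠ ∅ → a + pref P (j : ℕ) = (j : ℕ)
def UnionEq (A : Finset (Fin n)) (P : Fin n → Finset (Fin n)) : Prop :=
  ∀ x, x ∈ A ↔ ∃ i, x ∈ P i

def QSet (g : Equiv.Perm (Fin n)) (a : ℕ) (A : Finset (Fin n)) :
    Finset (Fin n → Finset (Fin n)) :=
  Finset.univ.filter (fun P =>
    PD P ∧ AllInv g P ∧ ZeroLow a P ∧ SCond a P ∧ UnionEq A P)

def ECount (P : Fin n → Finset (Fin n)) : ℕ :=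
  (Finset.univ.filter (fun i : Fin n => P i ≠ ∅)).card

lemma pref_update {P : Fin n → Finset (Fin n)} {ja : Fin n} {C : Finset (Fin n)} {jv : ℕ}
    (h : (ja : ℕ) < jv) :
    pref (Function.update P ja C) jv + (P ja).card = pref P jv + C.card := by
  have hmem : ja ∈ Finset.univ.filter (fun i : Fin n => (i : ℕ) < jv) := by
    simp [h]
  have e1 : (Function.update P ja C ja).card +
      ∑ i ∈ (Finset.univ.filter (fun i : Fin n => (i : ℕ) < jv)).erase ja,
        (Function.update P ja C i).card
      = pref (Function.update P ja C) jv :=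
    Finset.add_sum_erase _ (fun i => (Function.update P ja C i).card) hmem
  have e2 : (P ja).card +
      ∑ i ∈ (Finset.univ.filter (fun i : Fin n => (i : ℕ) < jv)).erase ja, (P i).card
      = pref P jv :=
    Finset.add_sum_erase _ (fun i => (P i).card) hmem
  have e3 : ∑ i ∈ (Finset.univ.filter (fun i : Fin n => (i : ℕ) < jv)).erase ja,
      (Function.update P ja C i).card
      = ∑ i ∈ (Finset.univ.filter (fun i : Fin n => (i : ℕ) < jv)).erase ja, (P i).card := by
    apply Finset.sum_congr rfl
    intro x hx
    rw [Function.update_of_ne (Finset.ne_of_mem_erase hx)]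
  have e4 : Function.update P ja C ja = C := Function.update_self ja C P
  rw [e4] at e1
  omega

lemma pref_mono {P : Fin n → Finset (Fin n)} {j1 j2 : ℕ} (h : j1 ≤ j2) :
    pref P j1 ≤ pref P j2 := by
  apply Finset.sum_le_sum_of_subset
  intro x hx
  simp only [Finset.mem_filter, Finset.mem_univ, true_and] at hx ⊢
  omega

lemma pref_lower {P : Fin n → Finset (Fin n)} {ja : Fin n} {jv : ℕ} (h : (ja : ℕ) < jv) :
    (P ja).card ≤ pref P jv := by
  apply Finset.single_le_sum (f := fun i => (P i).card)
  · intro i _; exact Nat.zero_le _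
  · simp [h]

/-- The big recursion. -/
lemma recursion (g : Equiv.Perm (Fin n)) :
    ∀ m : ℕ, ∀ (a : ℕ) (A : Finset (Fin n)), A.card = m → InvSet g A → a + m ≤ n →
    ∑ P ∈ QSet g a A, (-1 : ℂ) ^ (ECount P) = (-1) ^ (nOrb g A) := by
  intro m
  induction m using Nat.strong_induction_on with
  | _ m ih =>
  intro a A hcard hinv hle
  rcases Nat.eq_zero_or_pos m with rfl | hm
  · -- base case : A = ∅
    have hA : A = ∅ := Finset.card_eq_zero.mp hcard
    subst hA
    have hQ : QSet g a (∅ : Finset (Fin n)) = {fun _ => ∅} := by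
      ext P
      simp only [QSet, Finset.mem_filter, Finset.mem_univ, true_and, Finset.mem_singleton]
      constructor
      · rintro ⟨_, _, _, _, hU⟩
        funext i
        rw [Finset.eq_empty_iff_forall_notMem]
        intro x hx
        exact absurd ((hU x).mpr ⟨i, hx⟩) (Finset.notMem_empty x)
      · rintro rfl
        refine ⟨fun i j _ => by simp, fun i => by simp, fun j _ => rfl, fun j hj => absurd rfl hj,
          fun x => ⟨fun hx => absurd hx (Finset.notMem_empty x), ?_⟩⟩
        rintro ⟨i, hi⟩
        exact absurd hi (Finset.notMem_empty x)
    rw [hQ, Finset.sum_singleton, nOrb_empty]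
    have : ECount (fun _ : Fin n => (∅ : Finset (Fin n))) = 0 := by
      simp [ECount]
    rw [this]
  · -- step : A nonempty
    have hAne : A.Nonempty := Finset.card_pos.mp (by omega)
    have han : a < n := by omega
    set ja : Fin n := ⟨a, han⟩ with hja
    -- every P in QSet has first nonempty block at position ja
    have hfirst : ∀ P ∈ QSet g a A, P ja ≠ ∅ := by
      intro P hP
      simp only [QSet, Finset.mem_filter, Finset.mem_univ, true_and] at hP
      obtain ⟨hPD, hAI, hZL, hSC, hU⟩ := hP
      -- there is a nonempty block
      obtain ⟨x, hx⟩ := hAne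
      obtain ⟨i0, hi0⟩ := (hU x).mp hx
      have hi0ne : P i0 ≠ ∅ := by
        intro hc
        rw [hc] at hi0
        exact absurd hi0 (Finset.notMem_empty x)
      have hne : (Finset.univ.filter (fun i : Fin n => P i ≠ ∅)).Nonempty :=
        ⟨i0, by simpa only [Finset.mem_filter, Finset.mem_univ, true_and] using hi0ne⟩
      set j1 := (Finset.univ.filter (fun i : Fin n => P i ≠ ∅)).min' hne with hj1
      have hj1mem := (Finset.univ.filter (fun i : Fin n => P i ≠ ∅)).min'_mem hne
      simp only [Finset.mem_filter, Finset.mem_univ, true_and] at hj1mem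
      have hprefz : pref P (j1 : ℕ) = 0 := by
        apply Finset.sum_eq_zero
        intro i hi
        simp only [Finset.mem_filter, Finset.mem_univ, true_and] at hi
        by_contra hc
        have himem : i ∈ Finset.univ.filter (fun i : Fin n => P i ≠ ∅) := by
          simp only [Finset.mem_filter, Finset.mem_univ, true_and]
          intro h0
          rw [h0] at hc
          exact hc rfl
        have := Finset.min'_le _ i himem
        rw [← hj1] at this
        have : (j1 : ℕ) ≤ (i : ℕ) := this
        omega
      have := hSC j1 hj1mem
      rw [hprefz] at this
      have hj1ja : j1 = ja := by
        apply Fin.ext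
        simp only [hja]
        omega
      rw [← hj1ja]
      exact hj1mem
    -- fiberwise decomposition over the first block
    have hmaps : ∀ P ∈ QSet g a A, P ja ∈ A.powerset.filter (fun B => B.Nonempty ∧ InvSet g B) := by
      intro P hP
      have hne := hfirst P hP
      simp only [QSet, Finset.mem_filter, Finset.mem_univ, true_and] at hP
      obtain ⟨hPD, hAI, hZL, hSC, hU⟩ := hP
      simp only [Finset.mem_filter, Finset.mem_powerset]
      refine ⟨fun x hx => (hU x).mpr ⟨ja, hx⟩, Finset.nonempty_iff_ne_empty.mpr hne, hAI ja⟩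
    rw [← Finset.sum_fiberwise_of_maps_to hmaps (fun P => (-1 : ℂ) ^ (ECount P))]
    -- each fiber equals the sum over the reduced problem
    have hfiber : ∀ B ∈ A.powerset.filter (fun B => B.Nonempty ∧ InvSet g B),
        ∑ P ∈ (QSet g a A).filter (fun P => P ja = B), (-1 : ℂ) ^ (ECount P)
        = -(-1 : ℂ) ^ (nOrb g (A \ B)) := by
      intro B hB
      simp only [Finset.mem_filter, Finset.mem_powerset] at hB
      obtain ⟨hBA, hBne, hBinv⟩ := hB
      have hBcard : 1 ≤ B.card := Finset.card_pos.mpr hBne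
      have hBcard2 : B.card ≤ m := hcard ▸ Finset.card_le_card hBA
      have hIH := ih (m - B.card) (by omega) (a + B.card) (A \ B)
        (by rw [Finset.card_sdiff_of_subset hBA]; omega) (inv_sdiff hinv hBinv) (by omega)
      rw [← hIH]
      have hneg : (-∑ P ∈ QSet g (a + B.card) (A \ B), (-1 : ℂ) ^ (ECount P))
          = ∑ P ∈ QSet g (a + B.card) (A \ B), (-(-1 : ℂ) ^ (ECount P)) := by
        rw [← Finset.sum_neg_distrib]
      rw [hneg]
      -- bijection between the fiber and QSet g (a + B.card) (A \ B)
      apply Finset.sum_nbij' (i := fun P : Fin n → Finset (Fin n) => Function.update P ja ∅)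
        (j := fun P : Fin n → Finset (Fin n) => Function.update P ja B)
      · -- membership forward
        intro P hP
        simp only [Finset.mem_filter] at hP
        obtain ⟨hPQ, hPja⟩ := hP
        simp only [QSet, Finset.mem_filter, Finset.mem_univ, true_and] at hPQ ⊢
        obtain ⟨hPD, hAI, hZL, hSC, hU⟩ := hPQ
        refine ⟨?_, ?_, ?_, ?_, ?_⟩
        · -- PD
          intro i j hij
          rcases eq_or_ne i ja with rfl | hi
          · rw [Function.update_self]; exact Finset.disjoint_empty_left _
          · rcases eq_or_ne j ja with rfl | hj
            · rw [Function.update_self]; exact Finset.disjoint_empty_right _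
            · rw [Function.update_of_ne hi, Function.update_of_ne hj]; exact hPD i j hij
        · -- AllInv
          intro i
          rcases eq_or_ne i ja with rfl | hi
          · rw [Function.update_self]; simp
          · rw [Function.update_of_ne hi]; exact hAI i
        · -- ZeroLow
          intro j hj
          rcases eq_or_ne j ja with rfl | hjne
          · rw [Function.update_self]
          · rw [Function.update_of_ne hjne]
            rcases Nat.lt_or_ge (j : ℕ) a with h1 | h1
            · exact hZL j h1
            · -- a ≤ j < a + |B| : block must be empty
              by_contra hc
              have := hSC j hc
              have hja_lt : (ja : ℕ) < (j : ℕ) := by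
                simp only [hja]
                have : (j : ℕ) ≠ a := by
                  intro hcc
                  exact hjne (Fin.ext (by simp [hja, hcc]))
                omega
              have hlow := pref_lower (P := P) (ja := ja) hja_lt
              rw [hPja] at hlow
              omega
        · -- SCond
          intro j hj
          have hjne : j ≠ ja := by
            intro hcc
            rw [hcc, Function.update_self] at hj
            exact hj rfl
          rw [Function.update_of_ne hjne] at hj
          have hsc := hSC j hj
          have hja_lt : (ja : ℕ) < (j : ℕ) := by
            have h1 : a ≤ (j : ℕ) := by omega
            have : (j : ℕ) ≠ a := fun hcc => hjne (Fin.ext (by simp [hja, hcc]))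
            simp only [hja]
            omega
          have hpu := pref_update (P := P) (ja := ja) (C := (∅ : Finset (Fin n)))
            (jv := (j : ℕ)) hja_lt
          rw [hPja] at hpu
          simp only [Finset.card_empty] at hpu
          omega
        · -- UnionEq
          intro x
          rw [Finset.mem_sdiff]
          constructor
          · rintro ⟨hxA, hxB⟩
            obtain ⟨i, hi⟩ := (hU x).mp hxA
            have hine : i ≠ ja := by
              intro hcc
              rw [hcc, hPja] at hi
              exact hxB hi
            exact ⟨i, by rw [Function.update_of_ne hine]; exact hi⟩
          · rintro ⟨i, hi⟩
            have hine : i ≠ ja := by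
              intro hcc
              rw [hcc, Function.update_self] at hi
              exact absurd hi (Finset.notMem_empty x)
            rw [Function.update_of_ne hine] at hi
            refine ⟨(hU x).mpr ⟨i, hi⟩, fun hxB => ?_⟩
            have := hPD i ja hine
            rw [hPja] at this
            exact (Finset.disjoint_left.mp this) hi hxB
      · -- membership backward
        intro P hP
        simp only [QSet, Finset.mem_filter, Finset.mem_univ, true_and] at hP ⊢
        obtain ⟨hPD, hAI, hZL, hSC, hU⟩ := hP
        have hPja : P ja = ∅ := hZL ja (by have hv : (ja : ℕ) = a := rfl; omega)
        constructor
        · refine ⟨?_, ?_, ?_, ?_, ?_⟩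
          · -- PD
            intro i j hij
            rcases eq_or_ne i ja with rfl | hi
            · rw [Function.update_self, Function.update_of_ne (Ne.symm hij)]
              rw [Finset.disjoint_left]
              intro x hxB hxPj
              have : x ∈ A \ B := (hU x).mpr ⟨j, hxPj⟩
              rw [Finset.mem_sdiff] at this
              exact this.2 hxB
            · rcases eq_or_ne j ja with rfl | hj
              · rw [Function.update_self, Function.update_of_ne hi]
                rw [Finset.disjoint_right]
                intro x hxB hxPi
                have : x ∈ A \ B := (hU x).mpr ⟨i, hxPi⟩
                rw [Finset.mem_sdiff] at this
                exact this.2 hxB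
              · rw [Function.update_of_ne hi, Function.update_of_ne hj]; exact hPD i j hij
          · intro i
            rcases eq_or_ne i ja with rfl | hi
            · rw [Function.update_self]; exact hBinv
            · rw [Function.update_of_ne hi]; exact hAI i
          · -- ZeroLow a
            intro j hj
            have hjne : j ≠ ja := by
              intro hcc
              rw [hcc] at hj
              simp only [hja] at hj
              omega
            rw [Function.update_of_ne hjne]
            exact hZL j (by omega)
          · -- SCond a
            intro j hj
            rcases eq_or_ne j ja with rfl | hjne
            · rw [Function.update_self] at hj
              have hv : (ja : ℕ) = a := rfl
              have : pref (Function.update P ja B) (ja : ℕ) = 0 := by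
                apply Finset.sum_eq_zero
                intro i hi
                simp only [Finset.mem_filter, Finset.mem_univ, true_and] at hi
                have hine : i ≠ ja := by
                  intro hcc
                  rw [hcc] at hi
                  omega
                rw [Function.update_of_ne hine, hZL i (by omega), Finset.card_empty]
              rw [this]
              omega
            · rw [Function.update_of_ne hjne] at hj
              have hsc := hSC j hj
              have hja_lt : (ja : ℕ) < (j : ℕ) := by
                simp only [hja]
                omega
              have hpu := pref_update (P := P) (ja := ja) (C := B) (jv := (j : ℕ)) hja_lt
              rw [hPja] at hpu
              simp only [Finset.card_empty] at hpu
              omega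
          · -- UnionEq A
            intro x
            constructor
            · intro hxA
              by_cases hxB : x ∈ B
              · exact ⟨ja, by rw [Function.update_self]; exact hxB⟩
              · obtain ⟨i, hi⟩ := (hU x).mp (Finset.mem_sdiff.mpr ⟨hxA, hxB⟩)
                have hine : i ≠ ja := by
                  intro hcc
                  rw [hcc, hPja] at hi
                  exact absurd hi (Finset.notMem_empty x)
                exact ⟨i, by rw [Function.update_of_ne hine]; exact hi⟩
            · rintro ⟨i, hi⟩
              rcases eq_or_ne i ja with rfl | hine
              · rw [Function.update_self] at hi
                exact hBA hi
              · rw [Function.update_of_ne hine] at hi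
                have := (hU x).mpr ⟨i, hi⟩
                exact (Finset.mem_sdiff.mp this).1
        · exact Function.update_self ja B P
      · -- left inverse
        intro P hP
        simp only [Finset.mem_filter] at hP
        funext i
        rcases eq_or_ne i ja with rfl | hi
        · rw [Function.update_self, hP.2]
        · rw [Function.update_of_ne hi, Function.update_of_ne hi]
      · -- right inverse
        intro P hP
        simp only [QSet, Finset.mem_filter, Finset.mem_univ, true_and] at hP
        have hPja : P ja = ∅ := hP.2.2.1 ja (by have hv : (ja : ℕ) = a := rfl; omega)
        funext i
        rcases eq_or_ne i ja with rfl | hi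
        · rw [Function.update_self, hPja]
        · rw [Function.update_of_ne hi, Function.update_of_ne hi]
      · -- weights
        intro P hP
        simp only [Finset.mem_filter] at hP
        have hEC : ECount P = ECount (Function.update P ja ∅) + 1 := by
          have hins : Finset.univ.filter (fun i : Fin n => P i ≠ ∅)
              = insert ja (Finset.univ.filter
                  (fun i : Fin n => Function.update P ja ∅ i ≠ ∅)) := by
            ext i
            simp only [Finset.mem_insert, Finset.mem_filter, Finset.mem_univ, true_and]
            rcases eq_or_ne i ja with rfl | hi
            · simp only [true_or, iff_true]
              rw [hP.2]
              exact hBne.ne_empty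
            · rw [Function.update_of_ne hi]
              constructor
              · intro h'; right; exact h'
              · rintro (rfl | h')
                · exact absurd rfl hi
                · exact h'
          have hnotmem : ja ∉ Finset.univ.filter
              (fun i : Fin n => Function.update P ja ∅ i ≠ ∅) := by
            simp only [Finset.mem_filter, Finset.mem_univ, true_and, Function.update_self]
            exact fun h' => h' rfl
          rw [ECount, ECount, hins, Finset.card_insert_of_notMem hnotmem]
        rw [hEC, pow_succ]
        ring
    rw [Finset.sum_congr rfl hfiber]
    -- final evaluation
    have hnadd : ∀ B ∈ A.powerset.filter (fun B => B.Nonempty ∧ InvSet g B),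
        (-(-1 : ℂ) ^ (nOrb g (A \ B))) = -(-1 : ℂ) ^ (nOrb g A) * (-1) ^ (nOrb g B) := by
      intro B hB
      simp only [Finset.mem_filter, Finset.mem_powerset] at hB
      obtain ⟨hBA, hBne, hBinv⟩ := hB
      obtain ⟨hds, hmono⟩ := nOrb_sdiff hBinv hBA
      rw [hds]
      have : (-1 : ℂ) ^ (nOrb g A - nOrb g B) * (-1) ^ (nOrb g B) = (-1) ^ (nOrb g A) := by
        rw [← pow_add]
        congr 1
        omega
      have h2 : (-1 : ℂ) ^ (nOrb g A - nOrb g B)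
          = (-1) ^ (nOrb g A) * (-1) ^ (nOrb g B) := by
        have hunit : (-1 : ℂ) ^ (nOrb g B) * (-1) ^ (nOrb g B) = 1 := by
          rw [← pow_add]
          exact Even.neg_one_pow ⟨nOrb g B, rfl⟩
        calc (-1 : ℂ) ^ (nOrb g A - nOrb g B)
            = (-1 : ℂ) ^ (nOrb g A - nOrb g B) * ((-1) ^ (nOrb g B) * (-1) ^ (nOrb g B)) := by
              rw [hunit, mul_one]
          _ = ((-1 : ℂ) ^ (nOrb g A - nOrb g B) * (-1) ^ (nOrb g B)) * (-1) ^ (nOrb g B) := by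
              ring
          _ = (-1) ^ (nOrb g A) * (-1) ^ (nOrb g B) := by rw [this]
      rw [h2]
      ring
    rw [Finset.sum_congr rfl hnadd]
    rw [← Finset.mul_sum]
    rw [sum_neg_one_nOrb hinv hAne]
    ring

lemma neg_one_pow_congr {a b : ℕ} (h : a % 2 = b % 2) : ((-1 : ℤ)) ^ a = (-1 : ℤ) ^ b := by
  rcases Nat.even_or_odd a with he | ho
  · rw [he.neg_one_pow]
    have : Even b := by rw [Nat.even_iff] at he ⊢; omega
    rw [this.neg_one_pow]
  · rw [ho.neg_one_pow]
    have : Odd b := by rw [Nat.odd_iff] at ho ⊢; omega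
    rw [this.neg_one_pow]

lemma orb_eq_singleton {g : Equiv.Perm (Fin n)} {x : Fin n} (hx : x ∉ g.support) :
    orb g x = {x} := by
  have hfix : g x = x := by rwa [← Equiv.Perm.notMem_support]
  ext y
  simp only [orb, Finset.mem_filter, Finset.mem_univ, true_and, Finset.mem_singleton]
  constructor
  · rintro ⟨i, hi⟩
    rw [Equiv.Perm.zpow_apply_eq_self_of_apply_eq_self hfix] at hi
    exact hi.symm
  · rintro rfl
    exact Equiv.Perm.SameCycle.refl g _

lemma orb_eq_cycleOf {g : Equiv.Perm (Fin n)} {x : Fin n} (hx : x ∈ g.support) :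
    orb g x = (g.cycleOf x).support := by
  ext y
  simp only [orb, Finset.mem_filter, Finset.mem_univ, true_and,
    Equiv.Perm.mem_support_cycleOf_iff]
  exact ⟨fun h => ⟨h, hx⟩, fun h => h.1⟩

lemma two_le_card_orb {g : Equiv.Perm (Fin n)} {x : Fin n} (hx : x ∈ g.support) :
    2 ≤ (orb g x).card := by
  rw [orb_eq_cycleOf hx]
  have hc : (g.cycleOf x).IsCycle := Equiv.Perm.isCycle_cycleOf g (Equiv.Perm.mem_support.mp hx)
  exact hc.two_le_card_support

lemma nOrb_univ (g : Equiv.Perm (Fin n)) :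
    nOrb g Finset.univ = (n - g.support.card) + g.cycleFactorsFinset.card := by
  have hsplit : (Finset.univ : Finset (Fin n)) = g.supportᶜ ∪ g.support := by
    ext x
    by_cases hx : x ∈ g.support <;> simp [hx]
  rw [nOrb, hsplit, Finset.image_union]
  have hdisj : Disjoint ((g.supportᶜ).image (orb g)) ((g.support).image (orb g)) := by
    rw [Finset.disjoint_left]
    rintro o ho1 ho2
    rcases Finset.mem_image.mp ho1 with ⟨x, hx, rfl⟩
    rcases Finset.mem_image.mp ho2 with ⟨y, hy, hoy⟩
    have h1 : (orb g x).card = 1 := by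
      rw [orb_eq_singleton (Finset.mem_compl.mp hx)]; simp
    have h2 := two_le_card_orb hy
    rw [hoy] at h2
    omega
  rw [Finset.card_union_of_disjoint hdisj]
  congr 1
  · -- singletons
    have : (g.supportᶜ).image (orb g) = (g.supportᶜ).image (fun x => ({x} : Finset (Fin n))) := by
      apply Finset.image_congr
      intro x hx
      exact orb_eq_singleton (Finset.mem_compl.mp hx)
    rw [this, Finset.card_image_of_injective _ (fun a b hab => Finset.singleton_injective hab),
      Finset.card_compl, Fintype.card_fin]
  · -- cycles
    have h1 : (g.support).image (orb g) = g.cycleFactorsFinset.image Equiv.Perm.support := by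
      ext o
      simp only [Finset.mem_image]
      constructor
      · rintro ⟨x, hx, rfl⟩
        exact ⟨g.cycleOf x, Equiv.Perm.cycleOf_mem_cycleFactorsFinset_iff.mpr hx,
          (orb_eq_cycleOf hx).symm⟩
      · rintro ⟨c, hc, rfl⟩
        have hcyc : c.IsCycle := (Equiv.Perm.mem_cycleFactorsFinset_iff.mp hc).1
        obtain ⟨x, hxc⟩ := hcyc.nonempty_support
        have hceq : c = g.cycleOf x := Equiv.Perm.cycle_is_cycleOf hxc hc
        have hxs : x ∈ g.support := by
          rw [← Equiv.Perm.cycleOf_mem_cycleFactorsFinset_iff, ← hceq]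
          exact hc
        exact ⟨x, hxs, by rw [orb_eq_cycleOf hxs, ← hceq]⟩
    rw [h1]
    apply Finset.card_image_of_injOn
    intro c1 hc1 c2 hc2 hsupp
    by_contra hne
    have hdisj := (Equiv.Perm.cycleFactorsFinset_pairwise_disjoint g) hc1 hc2 hne
    have := hdisj.disjoint_support
    rw [hsupp] at this
    have hcyc : c2.IsCycle := (Equiv.Perm.mem_cycleFactorsFinset_iff.mp hc2).1
    obtain ⟨x, hxc⟩ := hcyc.nonempty_support
    exact (Finset.disjoint_left.mp this) hxc hxc

lemma sign_eq_nOrb (g : Equiv.Perm (Fin n)) :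
    ((Equiv.Perm.sign g : ℤ)) = (-1) ^ (n + nOrb g Finset.univ) := by
  have h1 := Equiv.Perm.sign_of_cycleType g
  have h2 : ((Equiv.Perm.sign g : ℤ)) = (-1 : ℤ) ^ (g.cycleType.sum + Multiset.card g.cycleType) := by
    rw [h1]
    push_cast
    rfl
  rw [h2]
  have hsum : g.cycleType.sum = g.support.card := Equiv.Perm.sum_cycleType g
  have hcard : Multiset.card g.cycleType = g.cycleFactorsFinset.card := by
    rw [Equiv.Perm.cycleType]
    simp
  have hsupple : g.support.card ≤ n := by
    have := Finset.card_le_card (Finset.subset_univ g.support)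
    simpa using this
  rw [nOrb_univ, hsum, hcard]
  apply neg_one_pow_congr
  omega

/-- matching condition -/
def KCond (σ : Equiv.Perm (Fin n)) (P : Fin n → Finset (Fin n)) : Prop :=
  ∀ i : Fin n, (σ i : ℕ) + 1 = (P i).card + (i : ℕ)

lemma pref_succ {P : Fin n → Finset (Fin n)} {j : ℕ} (hj : j < n) :
    pref P (j + 1) = pref P j + (P ⟨j, hj⟩).card := by
  have hins : Finset.univ.filter (fun i : Fin n => (i : ℕ) < j + 1)
      = insert ⟨j, hj⟩ (Finset.univ.filter (fun i : Fin n => (i : ℕ) < j)) := by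
    ext i
    simp only [Finset.mem_insert, Finset.mem_filter, Finset.mem_univ, true_and]
    constructor
    · intro h
      rcases Nat.lt_or_ge (i : ℕ) j with h1 | h1
      · exact Or.inr h1
      · left
        apply Fin.ext
        simp only []
        omega
    · rintro (rfl | h)
      · simp
      · omega
  have hnm : (⟨j, hj⟩ : Fin n) ∉ Finset.univ.filter (fun i : Fin n => (i : ℕ) < j) := by
    simp
  rw [pref, hins, Finset.sum_insert hnm, pref]
  ring

lemma pref_top {P : Fin n → Finset (Fin n)} : pref P n = ∑ i : Fin n, (P i).card := by
  rw [pref]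
  congr 1
  apply Finset.filter_true_of_mem
  intro i _
  exact i.isLt

lemma pref_between {P : Fin n → Finset (Fin n)} {j1 j2 : ℕ} (h : j1 ≤ j2)
    (hemp : ∀ i : Fin n, j1 ≤ (i : ℕ) → (i : ℕ) < j2 → P i = ∅) :
    pref P j2 = pref P j1 := by
  have hsplit : Finset.univ.filter (fun i : Fin n => (i : ℕ) < j2)
      = (Finset.univ.filter (fun i : Fin n => (i : ℕ) < j1)) ∪
        (Finset.univ.filter (fun i : Fin n => j1 ≤ (i : ℕ) ∧ (i : ℕ) < j2)) := by
    ext i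
    simp only [Finset.mem_union, Finset.mem_filter, Finset.mem_univ, true_and]
    omega
  have hdisj : Disjoint (Finset.univ.filter (fun i : Fin n => (i : ℕ) < j1))
      (Finset.univ.filter (fun i : Fin n => j1 ≤ (i : ℕ) ∧ (i : ℕ) < j2)) := by
    rw [Finset.disjoint_left]
    intro i hi1 hi2
    simp only [Finset.mem_filter, Finset.mem_univ, true_and] at hi1 hi2
    omega
  rw [pref, hsplit, Finset.sum_union hdisj]
  have : ∑ i ∈ Finset.univ.filter (fun i : Fin n => j1 ≤ (i : ℕ) ∧ (i : ℕ) < j2),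
      (P i).card = 0 := by
    apply Finset.sum_eq_zero
    intro i hi
    simp only [Finset.mem_filter, Finset.mem_univ, true_and] at hi
    rw [hemp i hi.1 hi.2, Finset.card_empty]
  rw [this, pref]
  ring

/-- with total mass n, a position with full prefix must be nonempty -/
lemma nonempty_of_pref_eq {P : Fin n → Finset (Fin n)}
    (hTot : ∑ i : Fin n, (P i).card = n) (hSC : SCond 0 P)
    {j : Fin n} (hpref : pref P (j : ℕ) = (j : ℕ)) : P j ≠ ∅ := by
  intro hPj
  -- there is a nonempty block at position ≥ j
  have hex : ∃ i : Fin n, (j : ℕ) ≤ (i : ℕ) ∧ P i ≠ ∅ := by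
    by_contra hc
    push_neg at hc
    have : pref P n = pref P (j : ℕ) := by
      apply pref_between (le_of_lt j.isLt)
      intro i hi1 _
      exact hc i hi1
    rw [pref_top, hTot, hpref] at this
    omega
  -- minimal such position
  obtain ⟨j1, hj1mem, hj1min⟩ := Finset.exists_min_image
    (Finset.univ.filter (fun i : Fin n => (j : ℕ) ≤ (i : ℕ) ∧ P i ≠ ∅))
    (fun i => (i : ℕ))
    (by obtain ⟨i, hi1, hi2⟩ := hex
        exact ⟨i, by simp only [Finset.mem_filter, Finset.mem_univ, true_and]
                     exact ⟨hi1, hi2⟩⟩)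
  simp only [Finset.mem_filter, Finset.mem_univ, true_and] at hj1mem
  obtain ⟨hj1ge, hj1ne⟩ := hj1mem
  have hj1j : j ≠ j1 := by
    intro hcc
    rw [hcc] at hPj
    exact hj1ne hPj
  have hj1gt : (j : ℕ) < (j1 : ℕ) := by
    rcases Nat.lt_or_ge (j : ℕ) (j1 : ℕ) with h1 | h1
    · exact h1
    · have : (j : ℕ) = (j1 : ℕ) := by omega
      exact absurd (Fin.ext this) hj1j
  have hprefj1 : pref P (j1 : ℕ) = pref P (j : ℕ) := by
    apply pref_between (le_of_lt hj1gt)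
    intro i hi1 hi2
    by_contra hc
    have hiT : i ∈ Finset.univ.filter (fun i : Fin n => (j : ℕ) ≤ (i : ℕ) ∧ P i ≠ ∅) := by
      simp only [Finset.mem_filter, Finset.mem_univ, true_and]
      exact ⟨hi1, hc⟩
    have := hj1min i hiT
    omega
  have := hSC j1 hj1ne
  rw [hprefj1, hpref] at this
  omega

lemma claimA {P : Fin n → Finset (Fin n)}
    (hTot : ∑ i : Fin n, (P i).card = n) (hSC : SCond 0 P) :
    ∀ j : ℕ, j ≤ n → j ≤ pref P j := by
  intro j
  induction j with
  | zero => intro _; exact Nat.zero_le _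
  | succ j ihj =>
    intro hj
    have hjn : j < n := by omega
    have h1 := ihj (by omega)
    rcases Nat.lt_or_ge j (pref P j) with h2 | h2
    · have := pref_mono (P := P) (j1 := j) (j2 := j + 1) (by omega)
      omega
    · have hpe : pref P j = j := by omega
      have hne := nonempty_of_pref_eq hTot hSC (j := ⟨j, hjn⟩) hpe
      have := pref_succ (P := P) hjn
      have hcard : 1 ≤ (P ⟨j, hjn⟩).card := Finset.card_pos.mpr
        (Finset.nonempty_iff_ne_empty.mpr hne)
      omega

lemma conds_to_matches {P : Fin n → Finset (Fin n)} (hPD : PD P)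
    (hU : UnionEq Finset.univ P) (hSC : SCond 0 P) :
    ∃ σ : Equiv.Perm (Fin n), KCond σ P := by
  -- total mass is n
  have hbu : Finset.univ.biUnion P = Finset.univ := by
    apply Finset.eq_univ_iff_forall.mpr
    intro x
    rw [Finset.mem_biUnion]
    obtain ⟨i, hi⟩ := (hU x).mp (Finset.mem_univ x)
    exact ⟨i, Finset.mem_univ i, hi⟩
  have hTot : ∑ i : Fin n, (P i).card = n := by
    have := Finset.card_biUnion (s := Finset.univ) (t := P)
      (fun i _ j _ hij => hPD i j hij)
    rw [hbu] at this
    simp only [Finset.card_univ, Fintype.card_fin] at this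
    omega
  have hA := claimA hTot hSC
  -- bounds for the would-be permutation
  have hub : ∀ i : Fin n, (P i).card + (i : ℕ) ≤ n := by
    intro i
    have h1 := hA (i : ℕ) (le_of_lt i.isLt)
    have h2 := pref_succ (P := P) i.isLt
    have h3 := pref_mono (P := P) (j1 := (i : ℕ) + 1) (j2 := n) i.isLt
    rw [pref_top, hTot] at h3
    have : (⟨(i : ℕ), i.isLt⟩ : Fin n) = i := Fin.ext rfl
    rw [this] at h2
    omega
  have hlb : ∀ i : Fin n, 1 ≤ (P i).card + (i : ℕ) := by
    intro i
    rcases Nat.eq_zero_or_pos (i : ℕ) with hz | hp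
    · have h0n : (0 : ℕ) < n := Fin.pos i
      have hi0 : i = ⟨0, h0n⟩ := Fin.ext (by simp only [hz])
      have : pref P ((⟨0, h0n⟩ : Fin n) : ℕ) = ((⟨0, h0n⟩ : Fin n) : ℕ) := by
        show pref P 0 = 0
        rw [pref]
        have hempt : Finset.univ.filter (fun i : Fin n => (i : ℕ) < 0) = ∅ := by
          apply Finset.filter_false_of_mem
          intro i _
          omega
        rw [hempt, Finset.sum_empty]
      have hne := nonempty_of_pref_eq hTot hSC this
      have := Finset.card_pos.mpr (Finset.nonempty_iff_ne_empty.mpr hne)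
      have hv0 : ((⟨0, h0n⟩ : Fin n) : ℕ) = 0 := rfl
      rw [hi0]
      omega
    · omega
  set f : Fin n → Fin n := fun i => ⟨(P i).card + (i : ℕ) - 1, by have := hub i; have := hlb i; omega⟩
    with hf
  -- injectivity
  have hinjlt : ∀ i1 i2 : Fin n, (i1 : ℕ) < (i2 : ℕ) → f i1 = f i2 → False := by
    intro i1 i2 hlt heq
    have hval : (P i1).card + (i1 : ℕ) = (P i2).card + (i2 : ℕ) := by
      have := congrArg Fin.val heq
      simp only [hf] at this
      have := hlb i1
      have := hlb i2
      omega
    rcases Finset.eq_empty_or_nonempty (P i1) with he1 | hne1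
    · rcases Finset.eq_empty_or_nonempty (P i2) with he2 | hne2
      · rw [he1, he2] at hval
        simp at hval
        omega
      · -- P i1 = ∅, P i2 ≠ ∅ : impossible since card2 ≥ 1
        have hc2 : 1 ≤ (P i2).card := Finset.card_pos.mpr hne2
        rw [he1] at hval
        simp at hval
        omega
    · have hc1 : 1 ≤ (P i1).card := Finset.card_pos.mpr hne1
      have hsc1 := hSC i1 (Finset.nonempty_iff_ne_empty.mp hne1)
      rcases Finset.eq_empty_or_nonempty (P i2) with he2 | hne2
      · -- P i1 ≠ ∅, P i2 = ∅
        rw [he2] at hval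
        simp only [Finset.card_empty, Nat.zero_add] at hval
        -- card1 + i1 = i2 ; intermediate blocks are empty
        have hstep := pref_succ (P := P) i1.isLt
        have hfin : (⟨(i1 : ℕ), i1.isLt⟩ : Fin n) = i1 := Fin.ext rfl
        rw [hfin] at hstep
        have hemp : ∀ i : Fin n, (i1 : ℕ) + 1 ≤ (i : ℕ) → (i : ℕ) < (i2 : ℕ) → P i = ∅ := by
          intro i hi1 hi2
          by_contra hc
          have hsci := hSC i hc
          have hmono := pref_mono (P := P) (j1 := (i1 : ℕ) + 1) (j2 := (i : ℕ)) hi1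
          omega
        have hbetween : pref P (i2 : ℕ) = pref P ((i1 : ℕ) + 1) :=
          pref_between (by omega) hemp
        have hprefi2 : pref P (i2 : ℕ) = (i2 : ℕ) := by omega
        have := nonempty_of_pref_eq hTot hSC hprefi2
        rw [he2] at this
        exact this rfl
      · -- both nonempty
        have hc2 : 1 ≤ (P i2).card := Finset.card_pos.mpr hne2
        have hsc2 := hSC i2 (Finset.nonempty_iff_ne_empty.mp hne2)
        have hstep := pref_succ (P := P) i1.isLt
        have hfin : (⟨(i1 : ℕ), i1.isLt⟩ : Fin n) = i1 := Fin.ext rfl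
        rw [hfin] at hstep
        have hmono := pref_mono (P := P) (j1 := (i1 : ℕ) + 1) (j2 := (i2 : ℕ)) (by omega)
        omega
  have hinj : Function.Injective f := by
    intro i1 i2 heq
    by_contra hne
    rcases Nat.lt_or_ge (i1 : ℕ) (i2 : ℕ) with h1 | h1
    · exact hinjlt i1 i2 h1 heq
    · rcases Nat.lt_or_ge (i2 : ℕ) (i1 : ℕ) with h2 | h2
      · exact hinjlt i2 i1 h2 heq.symm
      · exact hne (Fin.ext (by omega))
  refine ⟨Equiv.ofBijective f (Finite.injective_iff_bijective.mp hinj), ?_⟩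
  intro i
  have : (Equiv.ofBijective f (Finite.injective_iff_bijective.mp hinj)) i = f i := rfl
  rw [this]
  simp only [hf]
  have := hlb i
  omega

lemma matches_to_conds {P : Fin n → Finset (Fin n)} (hPD : PD P)
    {σ : Equiv.Perm (Fin n)} (hK : KCond σ P) :
    UnionEq Finset.univ P ∧ SCond 0 P := by
  -- total mass
  have hsum1 : ∑ i : Fin n, ((σ i : ℕ) + 1) = ∑ i : Fin n, ((P i).card + (i : ℕ)) := by
    apply Finset.sum_congr rfl
    intro i _
    exact hK i
  have hsumσ : ∑ i : Fin n, (σ i : ℕ) = ∑ i : Fin n, (i : ℕ) :=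
    Equiv.sum_comp σ (fun i => (i : ℕ))
  have hTot : ∑ i : Fin n, (P i).card = n := by
    rw [Finset.sum_add_distrib, Finset.sum_add_distrib, hsumσ] at hsum1
    simp only [Finset.sum_const, Finset.card_univ, Fintype.card_fin, smul_eq_mul,
      mul_one] at hsum1
    omega
  constructor
  · -- UnionEq
    have hbu : Finset.univ.biUnion P = Finset.univ := by
      apply Finset.eq_univ_of_card
      rw [Finset.card_biUnion (fun i _ j _ hij => hPD i j hij)]
      rw [hTot, Fintype.card_fin]
    intro x
    constructor
    · intro _
      have : x ∈ Finset.univ.biUnion P := by rw [hbu]; exact Finset.mem_univ x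
      exact Finset.mem_biUnion.mp this |>.imp (fun i h => h.2)
    · intro _
      exact Finset.mem_univ x
  · -- SCond
    intro j hj
    have hcardj : 1 ≤ (P j).card := Finset.card_pos.mpr (Finset.nonempty_iff_ne_empty.mpr hj)
    have hσj : (j : ℕ) ≤ (σ j : ℕ) := by
      have := hK j
      omega
    -- σ.symm maps I_j into I_j
    set Ij := Finset.univ.filter (fun i : Fin n => (i : ℕ) < (j : ℕ)) with hIj
    have hmap : ∀ u ∈ Ij, σ.symm u ∈ Ij := by
      intro u hu
      simp only [hIj, Finset.mem_filter, Finset.mem_univ, true_and] at hu ⊢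
      have hKi := hK (σ.symm u)
      rw [σ.apply_symm_apply] at hKi
      have hle : (σ.symm u : ℕ) ≤ (u : ℕ) + 1 := by omega
      have hne : σ.symm u ≠ j := by
        intro hcc
        have : σ j = u := by rw [← hcc, σ.apply_symm_apply]
        rw [this] at hσj
        omega
      rcases Nat.lt_or_ge ((σ.symm u) : ℕ) (j : ℕ) with h1 | h1
      · exact h1
      · exfalso
        have : (σ.symm u : ℕ) = (j : ℕ) := by omega
        exact hne (Fin.ext this)
    have hinj : Set.InjOn σ.symm Ij := fun a _ b _ hab => σ.symm.injective hab
    have himg : Ij.image σ.symm = Ij := by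
      apply Finset.eq_of_subset_of_card_le
      · intro u hu
        rcases Finset.mem_image.mp hu with ⟨w, hw, rfl⟩
        exact hmap w hw
      · rw [Finset.card_image_of_injOn hinj]
    -- sums over I_j
    have hsumIj : ∑ i ∈ Ij, (σ i : ℕ) = ∑ i ∈ Ij, (i : ℕ) := by
      have h1 : ∑ u ∈ Ij.image σ.symm, (σ u : ℕ) = ∑ u ∈ Ij, (σ (σ.symm u) : ℕ) :=
        Finset.sum_image (fun a ha b hb hab => hinj ha hb hab)
    
      rw [himg] at h1
      rw [h1]
      apply Finset.sum_congr rfl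
      intro u _
      rw [σ.apply_symm_apply]
    have hcardIj : Ij.card = (j : ℕ) := card_val_lt (le_of_lt j.isLt)
    have hsum2 : ∑ i ∈ Ij, ((σ i : ℕ) + 1) = ∑ i ∈ Ij, ((P i).card + (i : ℕ)) :=
      Finset.sum_congr rfl (fun i _ => hK i)
    rw [Finset.sum_add_distrib, Finset.sum_add_distrib, hsumIj] at hsum2
    simp only [Finset.sum_const, hcardIj, smul_eq_mul, mul_one] at hsum2
    have : pref P (j : ℕ) = ∑ i ∈ Ij, (P i).card := rfl
    omega

/-- the sign partition (1,1,...,1) -/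
def oneN : PartN n :=
  ⟨Multiset.replicate n 1, by
    intro i hi
    rw [Multiset.eq_of_mem_replicate hi]
    norm_num, by simp⟩

lemma sorted_replicate (m : ℕ) : List.Pairwise (· ≤ ·) (List.replicate m (1 : ℕ)) := by
  induction m with
  | zero => simp
  | succ m ihm =>
    rw [List.replicate_succ, List.pairwise_cons]
    exact ⟨fun b hb => by rw [List.eq_of_mem_replicate hb], ihm⟩

lemma part_oneN {i : ℕ} (hi : i < n) : part (oneN : PartN n) i = 1 := by
  have hsort : Multiset.sort (Multiset.replicate n (1 : ℕ)) (· ≤ ·) = List.replicate n 1 := by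
    refine (fun hp h1 h2 => List.Perm.eq_of_pairwise' (r := (· ≤ ·)) h1 h2 hp) ?_ ?_ ?_
    · rw [← Multiset.coe_eq_coe, Multiset.sort_eq, Multiset.coe_replicate]
    · exact Multiset.pairwise_sort _ _
    · exact sorted_replicate n
  rw [part]
  show ((Multiset.sort (oneN (n := n)).parts (· ≤ ·)).reverse).getD i 0 = 1
  have hparts : (oneN : PartN n).parts = Multiset.replicate n 1 := rfl
  rw [hparts, hsort, List.reverse_replicate]
  rw [List.getD_eq_getElem _ _ (by simpa using hi)]
  simp

lemma permCharI_eq_card (c : Fin n → ℕ) (g : Equiv.Perm (Fin n)) :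
    permCharI c g = ((Finset.univ.filter (fun P : Fin n → Finset (Fin n) =>
      (∀ i, (P i).card = c i) ∧ (∀ i j, i ≠ j → Disjoint (P i) (P j)) ∧
      (∀ i, (P i).image g = P i))).card : ℂ) := by
  rw [permCharI, Nat.card_eq_fintype_card, Fintype.card_subtype]

lemma neg1pow {a b : ℕ} (h : b ≤ a) : (-1 : ℂ) ^ (a - b) = (-1) ^ a * (-1) ^ b := by
  have h1 : a - b + b = a := by omega
  have h2 : (-1 : ℂ) ^ a = (-1) ^ (a - b) * (-1) ^ b := by rw [← pow_add, h1]
  rw [h2, mul_assoc, ← pow_add]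
  have h3 : (-1 : ℂ) ^ (b + b) = 1 := Even.neg_one_pow ⟨b, rfl⟩
  rw [h3, mul_one]

lemma irrChar_oneN_eq_sign (g : Equiv.Perm (Fin n)) :
    irrChar (oneN : PartN n) g = ((Equiv.Perm.sign g : ℤ) : ℂ) := by
  have hpart : ∀ i : Fin n, part (oneN : PartN n) (i : ℕ) = 1 := fun i => part_oneN i.isLt
  -- Step 1: rewrite each σ-term as a sum over P
  have step1 : irrChar (oneN : PartN n) g
      = ∑ σ : Equiv.Perm (Fin n), ∑ P : Fin n → Finset (Fin n),
          (if KCond σ P ∧ PD P ∧ AllInv g P then ((Equiv.Perm.sign σ : ℤ) : ℂ) else 0) := by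
    rw [irrChar]
    apply Finset.sum_congr rfl
    intro σ _
    by_cases hcond : ∀ i : Fin n, (i : ℕ) ≤ part (oneN : PartN n) i + (σ i : ℕ)
    · rw [if_pos hcond, permCharI_eq_card]
      rw [← Finset.sum_filter]
      have hfeq : (Finset.univ.filter (fun P : Fin n → Finset (Fin n) =>
          (∀ i, (P i).card = part (oneN : PartN n) i + (σ i : ℕ) - (i : ℕ)) ∧
          (∀ i j, i ≠ j → Disjoint (P i) (P j)) ∧ (∀ i, (P i).image g = P i)))
          = (Finset.univ.filter (fun P : Fin n → Finset (Fin n) =>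
            KCond σ P ∧ PD P ∧ AllInv g P)) := by
        apply Finset.filter_congr
        intro P _
        constructor
        · rintro ⟨h1, h2, h3⟩
          refine ⟨fun i => ?_, h2, h3⟩
          have := h1 i
          have := hcond i
          have := hpart i
          omega
        · rintro ⟨h1, h2, h3⟩
          refine ⟨fun i => ?_, h2, h3⟩
          have := h1 i
          have := hpart i
          omega
      rw [← hfeq, Finset.sum_const, nsmul_eq_mul]
      ring
    · rw [if_neg hcond, mul_zero]
      symm
      apply Finset.sum_eq_zero
      intro P _
      rw [if_neg]
      rintro ⟨hK, _, _⟩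
      apply hcond
      intro i
      have := hK i
      have := hpart i
      omega
  rw [step1, Finset.sum_comm]
  have step2 : ∀ P : Fin n → Finset (Fin n),
      (∑ σ : Equiv.Perm (Fin n),
        if KCond σ P ∧ PD P ∧ AllInv g P then ((Equiv.Perm.sign σ : ℤ) : ℂ) else 0)
      = (if P ∈ QSet g 0 Finset.univ then (-1 : ℂ) ^ (n - ECount P) else 0) := by
    intro P
    by_cases hQ : P ∈ QSet g 0 Finset.univ
    · rw [if_pos hQ]
      have hQ' := hQ
      simp only [QSet, Finset.mem_filter, Finset.mem_univ, true_and] at hQ'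
      obtain ⟨hPD, hAI, hZL, hSC, hU⟩ := hQ'
      obtain ⟨σ₀, hK₀⟩ := conds_to_matches hPD hU hSC
      rw [Finset.sum_eq_single σ₀]
      · rw [if_pos ⟨hK₀, hPD, hAI⟩]
        have hprem : ∀ i : Fin n, (i : ℕ) ≤ (σ₀ i : ℕ) + 1 := fun i => by
          have := hK₀ i; omega
        have hsgn := lemS (∑ i : Fin n, ((σ₀ i : ℕ) - (i : ℕ))) σ₀ hprem rfl
        have hfe : Finset.univ.filter (fun i : Fin n => (i : ℕ) ≤ (σ₀ i : ℕ))
            = Finset.univ.filter (fun i : Fin n => P i ≠ ∅) := by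
          apply Finset.filter_congr
          intro i _
          have hKi := hK₀ i
          constructor
          · intro h hc
            rw [hc] at hKi
            simp only [Finset.card_empty, Nat.zero_add] at hKi
            omega
          · intro h
            have : 1 ≤ (P i).card :=
              Finset.card_pos.mpr (Finset.nonempty_iff_ne_empty.mpr h)
            omega
        rw [hfe] at hsgn
        rw [hsgn, ECount]
        push_cast
        ring
      · intro σ _ hσne
        rw [if_neg]
        rintro ⟨hK, _, _⟩
        apply hσne
        apply Equiv.ext
        intro i
        apply Fin.ext
        have := hK i
        have := hK₀ i
        omega
      · intro hcon
        exact absurd (Finset.mem_univ σ₀) hcon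
    · rw [if_neg hQ]
      apply Finset.sum_eq_zero
      intro σ _
      rw [if_neg]
      rintro ⟨hK, hPD2, hAI2⟩
      apply hQ
      obtain ⟨hU2, hSC2⟩ := matches_to_conds hPD2 hK
      simp only [QSet, Finset.mem_filter, Finset.mem_univ, true_and]
      exact ⟨hPD2, hAI2, fun j hj => absurd hj (Nat.not_lt_zero _), hSC2, hU2⟩
  rw [Finset.sum_congr rfl (fun P _ => step2 P)]
  rw [Finset.sum_ite_mem, Finset.univ_inter]
  have hconv : ∑ P ∈ QSet g 0 Finset.univ, (-1 : ℂ) ^ (n - ECount P)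
      = (-1 : ℂ) ^ n * ∑ P ∈ QSet g 0 Finset.univ, (-1 : ℂ) ^ (ECount P) := by
    rw [Finset.mul_sum]
    apply Finset.sum_congr rfl
    intro P _
    have hEle : ECount P ≤ n := by
      have := Finset.card_filter_le Finset.univ (fun i : Fin n => P i ≠ ∅)
      simpa [ECount] using this
    rw [neg1pow hEle]
  rw [hconv]
  have hinvuniv : InvSet g Finset.univ := by
    rw [InvSet]
    apply Finset.image_univ_of_surjective g.surjective
  rw [recursion g n 0 Finset.univ (by simp) hinvuniv (by omega)]
  rw [sign_eq_nOrb g]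
  push_cast
  rw [pow_add]

lemma part_twoRow {k : ℕ} (h1 : 0 < k) (h2 : k < n) (hk : k ≤ n - k) :
    (∀ i : ℕ, part (twoRowP n k h1 h2) i = if i = 0 then n - k else if i = 1 then k else 0) := by
  have hsort : Multiset.sort ({n - k, k} : Multiset ℕ) (· ≤ ·) = [k, n - k] := by
    refine (fun hp h1 h2 => List.Perm.eq_of_pairwise' (r := (· ≤ ·)) h1 h2 hp) ?_ ?_ ?_
    · rw [← Multiset.coe_eq_coe, Multiset.sort_eq]
      show ({n - k, k} : Multiset ℕ) = ↑([k, n - k] : List ℕ)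
      have : (↑([k, n - k] : List ℕ) : Multiset ℕ) = k ::ₘ (n - k) ::ₘ 0 := rfl
      rw [this]
      exact Multiset.cons_swap _ _ _
    · exact Multiset.pairwise_sort _ _
    · rw [List.pairwise_cons]
      exact ⟨fun b hb => by simp at hb; omega, by simp⟩
  intro i
  rw [part]
  have hparts : (twoRowP n k h1 h2).parts = ({n - k, k} : Multiset ℕ) := rfl
  rw [hparts, hsort]
  have hrev : ([k, n - k] : List ℕ).reverse = [n - k, k] := rfl
  rw [hrev]
  rcases i with _ | _ | i
  · rfl
  · rfl
  · simp only [if_neg (by omega : ¬(i + 1 + 1 = 0)), if_neg (by omega : ¬(i + 1 + 1 = 1))]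
    apply List.getD_eq_default
    simp

lemma inv_compl {g : Equiv.Perm (Fin n)} {B : Finset (Fin n)} (hB : B.image g = B) :
    Bᶜ.image g = Bᶜ := by
  apply Finset.eq_of_subset_of_card_le
  · intro y hy
    rcases Finset.mem_image.mp hy with ⟨x, hx, rfl⟩
    rw [Finset.mem_compl] at hx ⊢
    intro hgx
    apply hx
    rw [← hB] at hgx
    rcases Finset.mem_image.mp hgx with ⟨z, hz, hzx⟩
    have : z = x := g.injective hzx
    rwa [← this]
  · rw [Finset.card_image_of_injective _ g.injective]

lemma sigmaChar_twoRow {k : ℕ} (h1 : 0 < k) (h2 : k < n) (hk : k ≤ n - k)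
    (g : Equiv.Perm (Fin n)) :
    sigmaChar (twoRowP n k h1 h2) g =
      ((Finset.univ.filter (fun B : Finset (Fin n) => B.card = k ∧ B.image g = B)).card : ℂ) := by
  have hn2 : 2 ≤ n := by omega
  have hpart := part_twoRow h1 h2 hk
  set j0 : Fin n := ⟨0, by omega⟩ with hj0
  set j1 : Fin n := ⟨1, by omega⟩ with hj1
  have hj01 : j0 ≠ j1 := by
    intro hcc
    have := congrArg Fin.val hcc
    simp [hj0, hj1] at this
  rw [sigmaChar, permCharI_eq_card]
  congr 1
  apply Finset.card_bij (fun P _ => P j1)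
  · -- membership
    intro P hP
    simp only [Finset.mem_filter, Finset.mem_univ, true_and] at hP ⊢
    obtain ⟨hcards, hdisj, hinv⟩ := hP
    refine ⟨?_, hinv j1⟩
    have := hcards j1
    rw [hpart] at this
    simpa [hj1] using this
  · -- injectivity
    intro P hP Q hQ heq
    simp only [Finset.mem_filter, Finset.mem_univ, true_and] at hP hQ
    obtain ⟨hcP, hdP, hiP⟩ := hP
    obtain ⟨hcQ, hdQ, hiQ⟩ := hQ
    have hblock : ∀ (R : Fin n → Finset (Fin n)),
        (∀ i, (R i).card = part (twoRowP n k h1 h2) (i : ℕ)) →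
        (∀ i j, i ≠ j → Disjoint (R i) (R j)) →
        ∀ i, R i = if i = j0 then (R j1)ᶜ else if i = j1 then R j1 else ∅ := by
      intro R hc hd i
      rcases eq_or_ne i j0 with rfl | hi0
      · rw [if_pos rfl]
        apply Finset.eq_of_subset_of_card_le
        · have := hd j0 j1 hj01
          intro x hx
          rw [Finset.mem_compl]
          exact fun hx1 => (Finset.disjoint_left.mp this) hx hx1
        · have h1' := hc j0
          have h2' := hc j1
          rw [hpart] at h1' h2'
          have hv0 : ((j0 : Fin n) : ℕ) = 0 := rfl
          have hv1 : ((j1 : Fin n) : ℕ) = 1 := rfl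
          rw [hv0, if_pos rfl] at h1'
          rw [hv1, if_neg (by omega : ¬(1 = 0)), if_pos rfl] at h2'
          rw [Finset.card_compl, h2', h1', Fintype.card_fin]
      · rw [if_neg hi0]
        rcases eq_or_ne i j1 with rfl | hi1
        · rw [if_pos rfl]
        · rw [if_neg hi1]
          have := hc i
          rw [hpart] at this
          have hv : ((i : Fin n) : ℕ) ≠ 0 ∧ ((i : Fin n) : ℕ) ≠ 1 := by
            constructor
            · intro hcc; exact hi0 (Fin.ext hcc)
            · intro hcc; exact hi1 (Fin.ext hcc)
          rw [if_neg hv.1, if_neg hv.2] at this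
          exact Finset.card_eq_zero.mp this
    funext i
    rw [hblock P hcP hdP i, hblock Q hcQ hdQ i, heq]
  · -- surjectivity
    intro B hB
    simp only [Finset.mem_filter, Finset.mem_univ, true_and] at hB
    obtain ⟨hBcard, hBinv⟩ := hB
    refine ⟨fun i => if i = j0 then Bᶜ else if i = j1 then B else ∅, ?_, ?_⟩
    · simp only [Finset.mem_filter, Finset.mem_univ, true_and]
      refine ⟨?_, ?_, ?_⟩
      · intro i
        rw [hpart]
        rcases eq_or_ne i j0 with rfl | hi0
        · rw [if_pos rfl]
          have : ((j0 : Fin n) : ℕ) = 0 := rfl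
          rw [this, if_pos rfl, Finset.card_compl, hBcard, Fintype.card_fin]
        · rw [if_neg hi0]
          rcases eq_or_ne i j1 with rfl | hi1
          · rw [if_pos rfl]
            have : ((j1 : Fin n) : ℕ) = 1 := rfl
            rw [this]
            simp only [if_neg (by omega : ¬(1 = 0)), if_pos rfl]
            exact hBcard
          · rw [if_neg hi1]
            have hv : ((i : Fin n) : ℕ) ≠ 0 ∧ ((i : Fin n) : ℕ) ≠ 1 := by
              constructor
              · intro hcc; exact hi0 (Fin.ext hcc)
              · intro hcc; exact hi1 (Fin.ext hcc)
            rw [if_neg hv.1, if_neg hv.2]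
            simp
      · intro i j hij
        rcases eq_or_ne i j0 with rfl | hi0 <;> rcases eq_or_ne j j0 with rfl | hj0'
        · exact absurd rfl hij
        · rw [if_pos rfl, if_neg hj0']
          rcases eq_or_ne j j1 with rfl | hj1'
          · rw [if_pos rfl]
            exact disjoint_compl_left
          · rw [if_neg hj1']
            simp
        · rw [if_pos rfl, if_neg hi0]
          rcases eq_or_ne i j1 with rfl | hi1
          · rw [if_pos rfl]
            exact disjoint_compl_right
          · rw [if_neg hi1]
            simp
        · rw [if_neg hi0, if_neg hj0']
          rcases eq_or_ne i j1 with rfl | hi1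
          · rw [if_pos rfl]
            rcases eq_or_ne j j1 with rfl | hj1'
            · exact absurd rfl hij
            · rw [if_neg hj1']
              simp
          · rw [if_neg hi1]
            simp
      · intro i
        rcases eq_or_ne i j0 with rfl | hi0
        · rw [if_pos rfl]
          exact inv_compl hBinv
        · rw [if_neg hi0]
          rcases eq_or_ne i j1 with rfl | hi1
          · rw [if_pos rfl]; exact hBinv
          · rw [if_neg hi1]; simp
    · simp [if_neg (Ne.symm hj01)]

/-- the counting lemma : few factors force a code collision -/
lemma counting {r k : ℕ} (hk : 1 ≤ k) (hn : 2 ≤ n) (t : Fin r → Finset (Fin n))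
    (hcards : ∀ i, (t i).card = k) (hlt : r * (k + 1) < 2 * (n - 1)) :
    ∃ a b : Fin n, a ≠ b ∧ ∀ i, (a ∈ t i ↔ b ∈ t i) := by
  by_contra hc
  push_neg at hc
  set code : Fin n → Finset (Fin r) := fun x => Finset.univ.filter (fun i => x ∈ t i)
    with hcode
  have hinj : Function.Injective code := by
    intro a b hab
    by_contra hne
    obtain ⟨i, hi⟩ := hc a b hne
    have key : a ∈ t i ↔ b ∈ t i := by
      constructor
      · intro ha
        have h1 : i ∈ code a := by simp [hcode, ha]
        rw [hab] at h1
        simpa [hcode] using h1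
      · intro hb
        have h1 : i ∈ code b := by simp [hcode, hb]
        rw [← hab] at h1
        simpa [hcode] using h1
    rcases hi with ⟨hm1, hm2⟩ | ⟨hm1, hm2⟩
    · exact hm2 (key.mp hm1)
    · exact hm1 (key.mpr hm2)
  -- total weight
  have hW : ∑ x : Fin n, (code x).card = r * k := by
    have h1 : ∀ x : Fin n, (code x).card = ∑ i : Fin r, (if x ∈ t i then 1 else 0) := by
      intro x
      rw [hcode]
      rw [Finset.card_filter]
    rw [Finset.sum_congr rfl (fun x _ => h1 x), Finset.sum_comm]
    have h2 : ∀ i : Fin r, ∑ x : Fin n, (if x ∈ t i then 1 else 0) = k := by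
      intro i
      rw [← Finset.card_filter]
      rw [Finset.filter_mem_eq_inter, Finset.univ_inter]
      exact hcards i
    rw [Finset.sum_congr rfl (fun i _ => h2 i)]
    simp [mul_comm]
  -- small code classes
  set A0 := Finset.univ.filter (fun x : Fin n => (code x).card = 0) with hA0
  set A1 := Finset.univ.filter (fun x : Fin n => (code x).card = 1) with hA1
  have hA0card : A0.card ≤ 1 := by
    rw [Finset.card_le_one]
    intro a ha b hb
    simp only [hA0, Finset.mem_filter, Finset.mem_univ, true_and] at ha hb
    apply hinj
    rw [Finset.card_eq_zero.mp ha, Finset.card_eq_zero.mp hb]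
  have hA1card : A1.card ≤ r := by
    have hmap : ∀ x ∈ A1, code x ∈ Finset.univ.powersetCard 1 := by
      intro x hx
      simp only [hA1, Finset.mem_filter, Finset.mem_univ, true_and] at hx
      rw [Finset.mem_powersetCard]
      exact ⟨Finset.subset_univ _, hx⟩
    have hinj2 : Set.InjOn code A1 := fun a _ b _ hab => hinj hab
    have := Finset.card_le_card_of_injOn code hmap hinj2
    rwa [Finset.card_powersetCard, Finset.card_univ, Fintype.card_fin,
      Nat.choose_one_right] at this
  -- pointwise bound
  have hpt : ∀ x : Fin n, 2 ≤ (code x).card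
      + 2 * (if x ∈ A0 then 1 else 0) + (if x ∈ A1 then 1 else 0) := by
    intro x
    by_cases h0 : (code x).card = 0
    · rw [if_pos (by simp only [hA0, Finset.mem_filter, Finset.mem_univ, true_and]; exact h0 : x ∈ A0)]
      split <;> omega
    · by_cases h1 : (code x).card = 1
      · rw [if_pos (by simp only [hA1, Finset.mem_filter, Finset.mem_univ, true_and]; exact h1 : x ∈ A1)]
        split <;> omega
      · split <;> split <;> omega
  have hsum := Finset.sum_le_sum (fun x (_ : x ∈ (Finset.univ : Finset (Fin n))) => hpt x)
  rw [Finset.sum_add_distrib, Finset.sum_add_distrib, hW] at hsum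
  simp only [Finset.sum_const, Finset.card_univ, Fintype.card_fin, smul_eq_mul,
    mul_one] at hsum
  rw [← Finset.mul_sum] at hsum
  have hb0 : ∑ x : Fin n, (if x ∈ A0 then 1 else 0) = A0.card := by
    rw [← Finset.card_filter]
    congr 1
    rw [Finset.filter_mem_eq_inter, Finset.univ_inter]
  have hb1 : ∑ x : Fin n, (if x ∈ A1 then 1 else 0) = A1.card := by
    rw [← Finset.card_filter]
    congr 1
    rw [Finset.filter_mem_eq_inter, Finset.univ_inter]
  rw [hb0, hb1] at hsum
  have hexp : r * (k + 1) = r * k + r := by ring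
  omega

lemma image_swap {B : Finset (Fin n)} {a b : Fin n} (h : a ∈ B ↔ b ∈ B) :
    B.image (Equiv.swap a b) = B := by
  apply Finset.eq_of_subset_of_card_le
  · intro y hy
    rcases Finset.mem_image.mp hy with ⟨x, hx, rfl⟩
    rcases eq_or_ne x a with rfl | hxa
    · rw [Equiv.swap_apply_left]
      exact h.mp hx
    · rcases eq_or_ne x b with rfl | hxb
      · rw [Equiv.swap_apply_right]
        exact h.mpr hx
      · rw [Equiv.swap_apply_of_ne_of_ne hxa hxb]
        exact hx
  · rw [Finset.card_image_of_injective _ (Equiv.swap a b).injective]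

/-- the key vanishing result -/
lemma main_vanish {r k : ℕ} (hk : 1 ≤ k) (hn : 2 ≤ n)
    (hlt : r * (k + 1) < 2 * (n - 1)) :
    ∑ x : Equiv.Perm (Fin n),
      (((Finset.univ.filter (fun B : Finset (Fin n) => B.card = k ∧ B.image x = B)).card : ℂ)) ^ r
        * ((Equiv.Perm.sign x : ℤ) : ℂ) = 0 := by
  set F : Equiv.Perm (Fin n) → Finset (Finset (Fin n)) :=
    fun x => Finset.univ.filter (fun B : Finset (Fin n) => B.card = k ∧ B.image x = B) with hF
  -- expand the power as a sum over tuples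
  have hpow : ∀ x : Equiv.Perm (Fin n), (((F x).card : ℂ)) ^ r
      = ∑ t : Fin r → Finset (Fin n), (if ∀ i, t i ∈ F x then (1 : ℂ) else 0) := by
    intro x
    have h1 : Fintype.piFinset (fun _ : Fin r => F x)
        = Finset.univ.filter (fun t : Fin r → Finset (Fin n) => ∀ i, t i ∈ F x) := by
      ext t
      simp [Fintype.mem_piFinset]
    have h2 : ((F x).card) ^ r = (Fintype.piFinset (fun _ : Fin r => F x)).card := by
      rw [Fintype.card_piFinset]
      simp
    calc (((F x).card : ℂ)) ^ r = ((((F x).card) ^ r : ℕ) : ℂ) := by push_cast; ring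
      _ = (((Fintype.piFinset (fun _ : Fin r => F x)).card : ℕ) : ℂ) := by rw [h2]
      _ = ∑ t : Fin r → Finset (Fin n), (if ∀ i, t i ∈ F x then (1 : ℂ) else 0) := by
          rw [h1]
          rw [← Finset.sum_filter]
          simp
  have step : ∑ x : Equiv.Perm (Fin n), (((F x).card : ℂ)) ^ r * ((Equiv.Perm.sign x : ℤ) : ℂ)
      = ∑ t : Fin r → Finset (Fin n), ∑ x : Equiv.Perm (Fin n),
          (if ∀ i, t i ∈ F x then ((Equiv.Perm.sign x : ℤ) : ℂ) else 0) := by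
    rw [Finset.sum_congr rfl (fun x _ => by rw [hpow x, Finset.sum_mul])]
    rw [Finset.sum_comm]
    apply Finset.sum_congr rfl
    intro t _
    apply Finset.sum_congr rfl
    intro x _
    rw [ite_mul, one_mul, zero_mul]
  rw [step]
  apply Finset.sum_eq_zero
  intro t _
  by_cases hex : ∃ x : Equiv.Perm (Fin n), ∀ i, t i ∈ F x
  · obtain ⟨x₀, hx₀⟩ := hex
    have hcards : ∀ i, (t i).card = k := by
      intro i
      have := hx₀ i
      rw [hF, Finset.mem_filter] at this
      exact this.2.1
    obtain ⟨a, b, hab, hiff⟩ := counting hk hn t hcards hlt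
    rw [← Finset.sum_filter]
    apply Finset.sum_involution (fun x _ => x * Equiv.swap a b)
    · intro x _
      have : Equiv.Perm.sign (x * Equiv.swap a b) = - Equiv.Perm.sign x := by
        rw [Equiv.Perm.sign_mul, Equiv.Perm.sign_swap hab]
        simp
      rw [this]
      push_cast
      ring
    · intro x _ _
      intro hcc
      have : Equiv.swap a b = 1 := by
        have := congrArg (fun z => x⁻¹ * z) hcc
        simpa [mul_assoc] using this
      have := congrArg (fun e : Equiv.Perm (Fin n) => e a) this
      simp only [Equiv.swap_apply_left, Equiv.Perm.coe_one, id_eq] at this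
      exact hab this.symm
    · intro x hx
      simp only [Finset.mem_filter, Finset.mem_univ, true_and] at hx ⊢
      intro i
      have hti := hx i
      rw [hF, Finset.mem_filter] at hti ⊢
      refine ⟨Finset.mem_univ _, hti.2.1, ?_⟩
      have hcoe : ⇑(x * Equiv.swap a b) = ⇑x ∘ ⇑(Equiv.swap a b) := rfl
      rw [hcoe, ← Finset.image_image, image_swap (hiff i)]
      exact hti.2.2
    · intro x _
      rw [mul_assoc, Equiv.swap_mul_self, mul_one]
  · apply Finset.sum_eq_zero
    intro x _
    rw [if_neg]
    intro hcc
    exact hex ⟨x, hcc⟩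

end AuxSign

theorem stmt10 (n k : ℕ) (hk1 : 1 ≤ k) (hk2 : k ≤ n / 2) (r : ℕ) (hr : 0 < r)
    (hcov : ∀ lam : PartN n,
      classInner (fun g => sigmaChar (twoRowP n k (by omega) (by omega)) g ^ r)
        (irrChar lam) ≠ 0) :
    (2 * (n - 1) + k) / (k + 1) ≤ r := by
  by_contra hgoal
  push_neg at hgoal
  have hn2 : 2 ≤ n := by omega
  have hknk : k ≤ n - k := by omega
  have hlt : r * (k + 1) < 2 * (n - 1) := by
    have h1 : r + 1 ≤ (2 * (n - 1) + k) / (k + 1) := hgoal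
    have h2 := Nat.div_mul_le_self (2 * (n - 1) + k) (k + 1)
    have h3 : (r + 1) * (k + 1) ≤ ((2 * (n - 1) + k) / (k + 1)) * (k + 1) :=
      Nat.mul_le_mul_right _ h1
    have hexp : (r + 1) * (k + 1) = r * (k + 1) + (k + 1) := by ring
    omega
  apply hcov oneN
  rw [classInner]
  have hz : ∑ x : Equiv.Perm (Fin n),
      sigmaChar (twoRowP n k (by omega) (by omega)) x ^ r * irrChar oneN x⁻¹ = 0 := by
    have hterm : ∀ x : Equiv.Perm (Fin n),
        sigmaChar (twoRowP n k (by omega) (by omega)) x ^ r * irrChar oneN x⁻¹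
        = (((Finset.univ.filter
              (fun B : Finset (Fin n) => B.card = k ∧ B.image x = B)).card : ℂ)) ^ r
            * ((Equiv.Perm.sign x : ℤ) : ℂ) := by
      intro x
      rw [sigmaChar_twoRow (by omega) (by omega) hknk x, irrChar_oneN_eq_sign x⁻¹,
        Equiv.Perm.sign_inv]
    rw [Finset.sum_congr rfl (fun x _ => hterm x)]
    exact main_vanish hk1 hn2 hlt
  rw [hz, mul_zero]


end CharCover
end
end
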